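/- Let p ∈ [1,2) and r > 0, and let B(r) ⊂ C_1 be the set of unparameterised (tree-like equivalence classes of) bounded variation paths whose tree-reduced length is at most r. Then B(r) is a compact subspace of the space of unparameterised paths C_p equipped with the product topology χ_pr. Consequently (C_1, χ_pr) = ∪_{r=1}^∞ B(r) is σ-compact. -/

import Mathlib

noncomputable section

open Filter Topology MeasureTheory

/-- Model of a finite-dimensional real inner product space of dimension `d`. -/
abbrev Vec (d : ℕ) : Type := EuclideanSpace ℝ (Fin d)

/-- The `k`-th tensor power `V^{⊗k}` of `Vec d` with its Hilbert–Schmidt inner product,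
realised in coordinates indexed by words of length `k` over the alphabet `Fin d`. -/
abbrev TLevel (d k : ℕ) : Type := EuclideanSpace ℝ (Fin k → Fin d)

/-- The extended tensor algebra `T((V)) = ∏_{k ≥ 0} V^{⊗k}`. -/
abbrev TSeq (d : ℕ) : Type := ∀ k : ℕ, TLevel d k

/-- Riemann–Stieltjes sum of `∫ f dg` over `[a,b]` along the uniform partition with `n` pieces. -/
def rsSum (f g : ℝ → ℝ) (a b : ℝ) (n : ℕ) : ℝ :=
  ∑ i ∈ Finset.range n,
    f (a + i * (b - a) / n) *
      (g (a + (i + 1) * (b - a) / n) - g (a + i * (b - a) / n))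

/-- The (Young / Riemann–Stieltjes) integral `∫_a^b f dg`, defined as the limit of
Riemann–Stieltjes sums along uniform partitions (junk value if no limit exists). -/
def rsInt (f g : ℝ → ℝ) (a b : ℝ) : ℝ :=
  limUnder atTop (rsSum f g a b)

/-- Iterated (Young) integral coordinate of a path, with the word given in *reverse*
order, so that `sigWord x a (i :: w) t = ∫_a^t (sigWord x a w u) d(x^i_u)`. -/
def sigWord {d : ℕ} (x : ℝ → Vec d) (a : ℝ) : List (Fin d) → ℝ → ℝ
  | [], _ => 1
  | i :: w, t => rsInt (fun u => sigWord x a w u) (fun u => x u i) a t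

/-- The `k`-th signature level `S(x)^{(k)}_{[a,b]} ∈ V^{⊗k}`, in coordinates. -/
def sigLevel {d : ℕ} (x : ℝ → Vec d) (a b : ℝ) (k : ℕ) : TLevel d k :=
  WithLp.toLp 2 (fun idx => sigWord x a (List.ofFn idx).reverse b)

/-- The signature transform `S(x)_{[a,b]} ∈ T((V))`. -/
def signatureT {d : ℕ} (x : ℝ → Vec d) (a b : ℝ) : TSeq d :=
  fun k => sigLevel x a b k

/-- The set of sums `Σ_i ‖x_{t_{i+1}} − x_{t_i}‖^p` over partitions `a = t_0 ≤ … ≤ t_n = b`. -/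
def varSums {E : Type*} [NormedAddCommGroup E] (x : ℝ → E) (p a b : ℝ) : Set ℝ :=
  { s | ∃ (n : ℕ) (t : ℕ → ℝ), Monotone t ∧ t 0 = a ∧ t n = b ∧
      s = ∑ i ∈ Finset.range n, ‖x (t (i + 1)) - x (t i)‖ ^ p }

/-- `x ∈ C_p([a,b], E)` : continuous with finite `p`-variation on `[a,b]`. -/
def MemCp {E : Type*} [NormedAddCommGroup E] (x : ℝ → E) (p a b : ℝ) : Prop :=
  ContinuousOn x (Set.Icc a b) ∧ BddAbove (varSums x p a b)

/-- The `p`-variation norm `‖x‖_{p,[a,b]}`. -/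
def pvar {E : Type*} [NormedAddCommGroup E] (x : ℝ → E) (p a b : ℝ) : ℝ :=
  sSup (varSums x p a b) ^ (1 / p)

/-- The product of the extended tensor algebra `T((V))`:
`(v · w)_k = Σ_{l=0}^{k} v_l ⊗ w_{k-l}`, in coordinates. -/
def seqMul {d : ℕ} (v w : TSeq d) : TSeq d :=
  fun k => WithLp.toLp 2 (fun idx =>
    ∑ l : Fin (k + 1),
      v l.1 (fun i => idx ⟨i.1, lt_of_lt_of_le i.2 (Nat.lt_succ_iff.mp l.2)⟩) *
        w (k - l.1) (fun j => idx ⟨l.1 + j.1, by have hj := j.2; omega⟩))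

/-- The unit `1 = (1,0,0,…)` of `T((V))`. -/
def seqOne (d : ℕ) : TSeq d :=
  fun k => if k = 0 then WithLp.toLp 2 (fun _ => (1 : ℝ)) else 0

/-- Truncation (canonical projection) `π_N : T((V)) → T_N(V)`. -/
def truncTS {d : ℕ} (N : ℕ) (v : TSeq d) : TSeq d :=
  fun k => if k ≤ N then v k else 0

/-- Tensor polynomials: elements of `T(V) = ⊕_k V^{⊗k}` inside `T((V))`. -/
def FinSuppTS {d : ℕ} (f : TSeq d) : Prop := ∃ N, ∀ k, N < k → f k = 0

/-- Pairing of a tensor polynomial over the dual with an element of `T((V))`,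
using the canonical (Hilbert–Schmidt) identification `(V^{⊗k})* ≅ (V*)^{⊗k}`. -/
def pairTS {d : ℕ} (f v : TSeq d) : ℝ :=
  ∑' k, @inner ℝ _ _ (f k) (v k)

/-- The shuffle product on `T(V*)`, in coordinates:
`(f ⧢ g)_n(w) = Σ_{A ⊆ {1,…,n}} f_{|A|}(w|_A) · g_{n−|A|}(w|_{Aᶜ})`. -/
def shuffleTS {d : ℕ} (f g : TSeq d) : TSeq d :=
  fun n => WithLp.toLp 2 (fun idx =>
    ∑ A : Finset (Fin n),
      f A.card (fun i => idx (A.orderIsoOfFin rfl i).1) *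
        g (n - A.card) (fun j =>
          idx ((Aᶜ).orderIsoOfFin (by simp [Finset.card_compl]) j).1))

/-- Concatenation `x * y` of paths, where `x` lives on `[a,b]` and `y` on `[b,c]`. -/
def concatP {d : ℕ} (x y : ℝ → Vec d) (b : ℝ) : ℝ → Vec d :=
  fun t => if t ≤ b then x t else y t - y b + x b

/-- Signatures over a fixed interval `[a,b]` of paths in `C_p([a,b],V)`. -/
def SigSet (d : ℕ) (p a b : ℝ) : Set (TSeq d) :=
  { s | ∃ x : ℝ → Vec d, MemCp x p a b ∧ s = signatureT x a b }

/-- `S_p`: the image of `C_p(V)` under the signature transform. -/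
def SigSetAll (d : ℕ) (p : ℝ) : Set (TSeq d) :=
  { s | ∃ (a b : ℝ) (x : ℝ → Vec d), a ≤ b ∧ MemCp x p a b ∧ s = signatureT x a b }

/-- The truncated tensor algebra `T_N(V) = ⊕_{k=0}^N V^{⊗k}` as a submodule of `T((V))`. -/
def truncSubmodule (d N : ℕ) : Submodule ℝ (TSeq d) where
  carrier := { v | ∀ k, N < k → v k = 0 }
  add_mem' := fun {u v} hu hv k hk => by
    show u k + v k = 0
    rw [hu k hk, hv k hk, add_zero]
  zero_mem' := fun k _ => rfl
  smul_mem' := fun c {v} hv k hk => by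
    show c • v k = 0
    rw [hv k hk, smul_zero]

/-- Paths in `C_p([a,b],V)` started at the origin. -/
def PathsFrom0 (d : ℕ) (p a b : ℝ) : Type := {x : ℝ → Vec d // MemCp x p a b ∧ x a = 0}

/-- Tree-like equivalence: two paths are equivalent iff their signatures agree. -/
def sigSetoid (d : ℕ) (p a b : ℝ) : Setoid (PathsFrom0 d p a b) where
  r x y := signatureT x.1 a b = signatureT y.1 a b
  iseqv := ⟨fun _ => rfl, Eq.symm, Eq.trans⟩

/-- The space `𝒞_p` of unparameterised paths. -/
def UPath (d : ℕ) (p a b : ℝ) : Type := Quotient (sigSetoid d p a b)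

/-- The signature transform on unparameterised paths. -/
def sigQ (d : ℕ) (p a b : ℝ) : UPath d p a b → TSeq d :=
  Quotient.lift (fun x => signatureT x.1 a b) (fun _ _ h => h)

/-- The product topology `χ_pr` on `𝒞_p`: the topology induced by the signature
transform from the product topology on `T((V)) = ∏_k V^{⊗k}`. -/
def prodTop (d : ℕ) (p a b : ℝ) : TopologicalSpace (UPath d p a b) :=
  TopologicalSpace.induced (sigQ d p a b) inferInstance

/-- The tree-reduced length of an unparameterised path: the infimum of the `1`-variation
over the bounded-variation representatives of the class. -/
def treeLength (d : ℕ) (p a b : ℝ) (q : UPath d p a b) : ℝ :=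
  sInf { L | ∃ x : PathsFrom0 d p a b,
    Quotient.mk (sigSetoid d p a b) x = q ∧ MemCp x.1 1 a b ∧ L = pvar x.1 1 a b }

/-- `B(r)`: unparameterised paths possessing a bounded-variation representative and
whose tree-reduced length is at most `r`. -/
def ballB (d : ℕ) (p a b r : ℝ) : Set (UPath d p a b) :=
  { q | (∃ x : PathsFrom0 d p a b,
      Quotient.mk (sigSetoid d p a b) x = q ∧ MemCp x.1 1 a b) ∧ treeLength d p a b q ≤ r }

/-- The `φ`-inner product `⟨u,v⟩_φ = Σ_k φ(k) ⟨u_k, v_k⟩` on tensor sequences. -/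
def kTS (d : ℕ) (φ : ℕ → ℝ) (u v : TSeq d) : ℝ :=
  ∑' k, φ k * @inner ℝ _ _ (u k) (v k)

/-- The `φ`-signature kernel on unparameterised paths. -/
def kQ (d : ℕ) (p a b : ℝ) (φ : ℕ → ℝ) (q q' : UPath d p a b) : ℝ :=
  kTS d φ (sigQ d p a b q) (sigQ d p a b q')

/-- The two-parameter `φ`-signature kernel `k_φ(x,y)_{s,t}` of two paths. -/
def kPath (d : ℕ) (φ : ℕ → ℝ) (x y : ℝ → Vec d) (a c s t : ℝ) : ℝ :=
  ∑' k, φ k * @inner ℝ _ _ (sigLevel x a s k) (sigLevel y c t k)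

/-- Double Riemann–Stieltjes sum approximating `∫_a^s ∫_c^t F(u,v) ⟨dx_u, dy_v⟩`. -/
def rsSum2 {d : ℕ} (F : ℝ → ℝ → ℝ) (x y : ℝ → Vec d) (a s c t : ℝ) (n : ℕ) : ℝ :=
  ∑ i ∈ Finset.range n, ∑ j ∈ Finset.range n,
    F (a + i * (s - a) / n) (c + j * (t - c) / n) *
      @inner ℝ _ _
        (x (a + (i + 1) * (s - a) / n) - x (a + i * (s - a) / n))
        (y (c + (j + 1) * (t - c) / n) - y (c + j * (t - c) / n))

/-- The element `i₁(v) ∈ T((V))` concentrated in tensor degree one. -/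
def unitVec {d : ℕ} (v : Vec d) : TSeq d :=
  fun k =>
    match k with
    | 1 => WithLp.toLp 2 (fun idx => v (idx 0))
    | _ => 0

/-- `E`-valued Riemann–Stieltjes sums for the controlled integral `∫_a^t Y_u · dx_u`,
where `m : E → V → E` implements right multiplication by degree-one tensors. -/
def rsSumE {d : ℕ} {E : Type*} [NormedAddCommGroup E]
    (m : E → Vec d → E) (Y : ℝ → E) (x : ℝ → Vec d) (a t : ℝ) (n : ℕ) : E :=
  ∑ i ∈ Finset.range n,
    m (Y (a + i * (t - a) / n))
      (x (a + (i + 1) * (t - a) / n) - x (a + i * (t - a) / n))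


/- ===================== Auxiliary development ===================== -/

namespace SigAux

open Set Finset

variable {E : Type*} [NormedAddCommGroup E]

theorem mem_varSums (x : ℝ → E) (p : ℝ) {a b : ℝ} {n : ℕ} {t : ℕ → ℝ} (ht : Monotone t)
    (h0 : t 0 = a) (hn : t n = b) :
    (∑ i ∈ Finset.range n, ‖x (t (i + 1)) - x (t i)‖ ^ p) ∈ varSums x p a b :=
  ⟨n, t, ht, h0, hn, rfl⟩

theorem varSums_nonneg {x : ℝ → E} {p a b s : ℝ} (hs : s ∈ varSums x p a b) : 0 ≤ s := by
  obtain ⟨n, t, _, _, _, rfl⟩ := hs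
  exact Finset.sum_nonneg fun i _ => Real.rpow_nonneg (norm_nonneg _) p

theorem norm_mem_varSums (x : ℝ → E) (p : ℝ) {a b : ℝ} (hab : a ≤ b) :
    (‖x b - x a‖ ^ p) ∈ varSums x p a b := by
  have hmono : Monotone (fun i : ℕ => if i = 0 then a else b) := by
    intro i j hij
    by_cases hi : i = 0
    · by_cases hj : j = 0 <;> simp [hi, hj, hab]
    · have hj : j ≠ 0 := by omega
      simp [hi, hj]
  have := mem_varSums x p (n := 1) hmono rfl rfl
  simpa using this

theorem varSums_nonempty (x : ℝ → E) (p : ℝ) {a b : ℝ} (hab : a ≤ b) :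
    (varSums x p a b).Nonempty :=
  ⟨_, norm_mem_varSums x p hab⟩

/-- The 1-variation of `x` over `[a,b]`. -/
noncomputable def VarI (x : ℝ → E) (a b : ℝ) : ℝ := sSup (varSums x 1 a b)

theorem pvar_one_eq (x : ℝ → E) (a b : ℝ) : pvar x 1 a b = VarI x a b := by
  have h1 : (1 : ℝ) / 1 = 1 := by norm_num
  rw [pvar, h1, Real.rpow_one, VarI]

theorem sum_norm_le_VarI {x : ℝ → E} {a b : ℝ} (hb : BddAbove (varSums x 1 a b))
    {t : ℕ → ℝ} {n : ℕ} (ht : Monotone t) (h0 : a ≤ t 0) (hn : t n ≤ b) :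
    ∑ i ∈ Finset.range n, ‖x (t (i + 1)) - x (t i)‖ ≤ VarI x a b := by
  have hab : a ≤ b := h0.trans ((ht (Nat.zero_le n)).trans hn)
  set u : ℕ → ℝ := fun i => match i with
    | 0 => a
    | j + 1 => if j ≤ n then min (t j) b else b with hu
  have hui : ∀ j, j ≤ n → u (j + 1) = t j := by
    intro j hj
    have hjb : t j ≤ b := le_trans (ht hj) hn
    simp [hu, hj, min_eq_left hjb]
  have humono : Monotone u := by
    apply monotone_nat_of_le_succ
    intro i
    match i with
    | 0 =>
      show a ≤ if 0 ≤ n then min (t 0) b else b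
      simp only [Nat.zero_le, if_true]
      exact le_min h0 hab
    | j + 1 =>
      show (if j ≤ n then min (t j) b else b) ≤ (if j + 1 ≤ n then min (t (j + 1)) b else b)
      by_cases h1 : j + 1 ≤ n
      · have h2 : j ≤ n := by omega
        simp only [h1, h2, if_true]
        exact min_le_min (ht (by omega)) le_rfl
      · by_cases h2 : j ≤ n <;> simp [h1, h2, min_le_right]
  have hlast : u (n + 1 + 1) = b := by
    show (if n + 1 ≤ n then min (t (n + 1)) b else b) = b
    simp
  have key : (∑ i ∈ Finset.range (n + 2), ‖x (u (i + 1)) - x (u i)‖) ∈ varSums x 1 a b := by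
    have := mem_varSums x 1 (n := n + 2) humono rfl hlast
    simpa [Real.rpow_one] using this
  have h1 : ∑ i ∈ Finset.range n, ‖x (t (i + 1)) - x (t i)‖
      ≤ ∑ i ∈ Finset.range (n + 2), ‖x (u (i + 1)) - x (u i)‖ := by
    rw [Finset.sum_range_succ' (fun i => ‖x (u (i + 1)) - x (u i)‖) (n + 1),
      Finset.sum_range_succ]
    have heq : ∀ i ∈ Finset.range n,
        ‖x (t (i + 1)) - x (t i)‖ = ‖x (u (i + 1 + 1)) - x (u (i + 1))‖ := by
      intro i hi
      simp only [Finset.mem_range] at hi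
      rw [hui i (by omega), hui (i + 1) (by omega)]
    rw [Finset.sum_congr rfl heq]
    have n1 : (0:ℝ) ≤ ‖x (u (n + 1 + 1)) - x (u (n + 1))‖ := norm_nonneg _
    have n2 : (0:ℝ) ≤ ‖x (u (0 + 1)) - x (u 0)‖ := norm_nonneg _
    linarith
  exact h1.trans (le_csSup hb key)

theorem varSums_le_sub {x : ℝ → E} {a b u v : ℝ} (hb : BddAbove (varSums x 1 a b))
    (hau : a ≤ u) (hvb : v ≤ b) {s : ℝ} (hs : s ∈ varSums x 1 u v) : s ≤ VarI x a b := by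
  obtain ⟨n, t, ht, h0, hn, rfl⟩ := hs
  have := sum_norm_le_VarI hb ht (h0 ▸ hau) (hn ▸ hvb)
  simpa [Real.rpow_one] using this

theorem bddAbove_sub {x : ℝ → E} {a b u v : ℝ} (hb : BddAbove (varSums x 1 a b))
    (hau : a ≤ u) (hvb : v ≤ b) : BddAbove (varSums x 1 u v) :=
  ⟨VarI x a b, fun _ hs => varSums_le_sub hb hau hvb hs⟩

theorem VarI_le_of_sub {x : ℝ → E} {a b u v : ℝ} (hb : BddAbove (varSums x 1 a b))
    (hau : a ≤ u) (huv : u ≤ v) (hvb : v ≤ b) : VarI x u v ≤ VarI x a b :=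
  csSup_le (varSums_nonempty x 1 huv) fun _ hs => varSums_le_sub hb hau hvb hs

theorem VarI_nonneg {x : ℝ → E} {u v : ℝ} (hb : BddAbove (varSums x 1 u v))
    (huv : u ≤ v) : 0 ≤ VarI x u v := by
  obtain ⟨s, hs⟩ := varSums_nonempty x 1 (a := u) (b := v) huv
  exact (varSums_nonneg hs).trans (le_csSup hb hs)

theorem norm_le_VarI {x : ℝ → E} {u v : ℝ} (hb : BddAbove (varSums x 1 u v))
    (huv : u ≤ v) : ‖x v - x u‖ ≤ VarI x u v := by
  have := le_csSup hb (norm_mem_varSums x 1 huv)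
  simpa [Real.rpow_one, VarI] using this

/-- join of two partitions -/
def joinSeq (t s : ℕ → ℝ) (n : ℕ) : ℕ → ℝ := fun i => if i ≤ n then t i else s (i - n)

theorem joinSeq_monotone {t s : ℕ → ℝ} {n : ℕ} (ht : Monotone t) (hs : Monotone s)
    (hts : t n = s 0) : Monotone (joinSeq t s n) := by
  apply monotone_nat_of_le_succ
  intro i
  unfold joinSeq
  by_cases h1 : i + 1 ≤ n
  · rw [if_pos (by omega : i ≤ n), if_pos h1]
    exact ht (by omega)
  · by_cases h2 : i ≤ n
    · have hin : i = n := by omega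
      subst hin
      rw [if_pos h2, if_neg h1, hts]
      exact hs (by omega)
    · rw [if_neg h2, if_neg h1]
      exact hs (by omega)

theorem joinSeq_sum (φ : ℝ → ℝ → ℝ) {t s : ℕ → ℝ} {n m : ℕ} (hts : t n = s 0) :
    ∑ i ∈ Finset.range (n + m), φ (joinSeq t s n i) (joinSeq t s n (i + 1))
      = (∑ i ∈ Finset.range n, φ (t i) (t (i + 1)))
        + ∑ j ∈ Finset.range m, φ (s j) (s (j + 1)) := by
  rw [Finset.sum_range_add]
  congr 1
  · refine Finset.sum_congr rfl fun i hi => ?_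
    simp only [Finset.mem_range] at hi
    unfold joinSeq
    rw [if_pos (by omega : i ≤ n), if_pos (by omega : i + 1 ≤ n)]
  · refine Finset.sum_congr rfl fun j hj => ?_
    simp only [Finset.mem_range] at hj
    unfold joinSeq
    by_cases hj0 : j = 0
    · subst hj0
      rw [if_pos (by omega : n + 0 ≤ n)]
      by_cases hn1 : n + 0 + 1 ≤ n
      · omega
      · rw [if_neg hn1]
        have : n + 0 + 1 - n = 1 := by omega
        rw [this]
        have : n + 0 = n := by omega
        rw [this, hts]
    · rw [if_neg (by omega), if_neg (by omega)]
      have e1 : n + j - n = j := by omega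
      have e2 : n + j + 1 - n = j + 1 := by omega
      rw [e1, e2]

theorem joinSeq_zero {t s : ℕ → ℝ} {n : ℕ} : joinSeq t s n 0 = t 0 := by
  unfold joinSeq; rw [if_pos (Nat.zero_le n)]

theorem joinSeq_last {t s : ℕ → ℝ} {n m : ℕ} {u c : ℝ} (hn : t n = u) (h0 : s 0 = u)
    (hm : s m = c) : joinSeq t s n (n + m) = c := by
  unfold joinSeq
  by_cases hm0 : m = 0
  · subst hm0
    rw [if_pos (by omega : n + 0 ≤ n)]
    have : n + 0 = n := by omega
    rw [this, hn, ← h0, hm]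
  · rw [if_neg (by omega)]
    have : n + m - n = m := by omega
    rw [this, hm]

theorem VarI_superadd {x : ℝ → E} {a b u : ℝ} (hb : BddAbove (varSums x 1 a b))
    (hau : a ≤ u) (hub : u ≤ b) : VarI x a u + VarI x u b ≤ VarI x a b := by
  have h1 : sSup (varSums x 1 a u) ≤ VarI x a b - sSup (varSums x 1 u b) := by
    apply csSup_le (varSums_nonempty x 1 hau)
    intro s1 hs1
    rw [le_sub_iff_add_le, add_comm]
    have h2 : sSup (varSums x 1 u b) ≤ VarI x a b - s1 := by
      apply csSup_le (varSums_nonempty x 1 hub)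
      intro s2 hs2
      rw [le_sub_iff_add_le]
      obtain ⟨n, t, ht, h0, hn, rfl⟩ := hs1
      obtain ⟨m, s', hs', h0', hm', rfl⟩ := hs2
      set w := joinSeq t s' n with hw
      have hwmono : Monotone w := joinSeq_monotone ht hs' (by rw [hn, h0'])
      have hw0 : w 0 = a := by rw [hw, joinSeq_zero]; exact h0
      have hwl : w (n + m) = b := joinSeq_last hn h0' hm'
      have hsum := joinSeq_sum (fun p q => ‖x q - x p‖ ^ (1:ℝ)) (t := t) (s := s') (m := m) (by rw [hn, h0'])
      have hmem := mem_varSums x 1 hwmono hw0 hwl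
      rw [hsum] at hmem
      have := le_csSup hb hmem
      rw [VarI]
      linarith
    linarith [add_le_add_right h2 s1]
  have := h1
  rw [VarI, VarI, VarI] at *
  linarith

theorem VarI_self (x : ℝ → E) (a : ℝ) : VarI x a a = 0 := by
  have hset : varSums x (1:ℝ) a a = {0} := by
    ext s
    constructor
    · rintro ⟨n, t, ht, h0, hn, rfl⟩
      have hconst : ∀ i, i ≤ n → t i = a := fun i hi =>
        le_antisymm (hn ▸ ht hi) (h0 ▸ ht (Nat.zero_le i))
      have : ∀ i ∈ Finset.range n, ‖x (t (i + 1)) - x (t i)‖ ^ (1:ℝ) = 0 := by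
        intro i hi
        simp only [Finset.mem_range] at hi
        rw [hconst i (by omega), hconst (i + 1) (by omega)]
        simp
      simp only [Set.mem_singleton_iff]
      exact Finset.sum_eq_zero this
    · rintro rfl
      exact ⟨0, fun _ => a, monotone_const, rfl, rfl, by simp⟩
  rw [VarI, hset, csSup_singleton]

theorem VarI_mono_right {x : ℝ → E} {a b u v : ℝ} (hb : BddAbove (varSums x 1 a b))
    (hau : a ≤ u) (huv : u ≤ v) (hvb : v ≤ b) : VarI x a u ≤ VarI x a v := by
  have h1 := VarI_superadd (bddAbove_sub hb le_rfl hvb) hau huv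
  have h2 := VarI_nonneg (bddAbove_sub hb hau hvb) huv
  linarith

theorem VarI_mono_left {x : ℝ → E} {a b u v : ℝ} (hb : BddAbove (varSums x 1 a b))
    (hau : a ≤ u) (huv : u ≤ v) (hvb : v ≤ b) : VarI x v b ≤ VarI x u b := by
  have h1 := VarI_superadd (bddAbove_sub hb hau le_rfl) huv hvb
  have h2 := VarI_nonneg (bddAbove_sub hb hau hvb) huv
  linarith

theorem VarI_subadd {x : ℝ → E} {a b u : ℝ} (hb : BddAbove (varSums x 1 a b))
    (hau : a ≤ u) (hub : u ≤ b) : VarI x a b ≤ VarI x a u + VarI x u b := by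
  apply csSup_le (varSums_nonempty x 1 (hau.trans hub))
  rintro s ⟨n, t, ht, h0, hn, rfl⟩
  have key : ∀ i ∈ Finset.range n, ‖x (t (i + 1)) - x (t i)‖ ^ (1:ℝ)
      ≤ ‖x (min (t (i + 1)) u) - x (min (t i) u)‖
        + ‖x (max (t (i + 1)) u) - x (max (t i) u)‖ := by
    intro i _
    rw [Real.rpow_one]
    have hmono : t i ≤ t (i + 1) := ht (by omega)
    rcases le_total (t (i + 1)) u with h | h
    · rw [min_eq_left h, min_eq_left (hmono.trans h), max_eq_right h,
        max_eq_right (hmono.trans h)]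
      simp
    · rcases le_total u (t i) with h' | h'
      · rw [min_eq_right h', min_eq_right (h'.trans hmono), max_eq_left h',
          max_eq_left (h'.trans hmono)]
        simp
      · rw [min_eq_right h, min_eq_left h', max_eq_left h, max_eq_right h']
        have := norm_sub_le_norm_sub_add_norm_sub (x (t (i+1))) (x u) (x (t i))
        linarith [this]
  calc ∑ i ∈ Finset.range n, ‖x (t (i + 1)) - x (t i)‖ ^ (1:ℝ)
      ≤ ∑ i ∈ Finset.range n, (‖x (min (t (i + 1)) u) - x (min (t i) u)‖
        + ‖x (max (t (i + 1)) u) - x (max (t i) u)‖) := Finset.sum_le_sum key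
    _ = (∑ i ∈ Finset.range n, ‖x (min (t (i + 1)) u) - x (min (t i) u)‖)
        + ∑ i ∈ Finset.range n, ‖x (max (t (i + 1)) u) - x (max (t i) u)‖ :=
      Finset.sum_add_distrib
    _ ≤ VarI x a u + VarI x u b := by
      have m1 : (∑ i ∈ Finset.range n, ‖x (min (t (i+1)) u) - x (min (t i) u)‖) ≤ VarI x a u := by
        have hmem := mem_varSums x 1 (t := fun i => min (t i) u) (n := n)
          (fun i j hij => min_le_min (ht hij) le_rfl)
          (by show min (t 0) u = a; rw [h0]; exact min_eq_left hau)
          (by show min (t n) u = u; rw [hn]; exact min_eq_right hub)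
        have := le_csSup (bddAbove_sub hb le_rfl hub) hmem
        simpa [Real.rpow_one, VarI] using this
      have m2 : (∑ i ∈ Finset.range n, ‖x (max (t (i+1)) u) - x (max (t i) u)‖) ≤ VarI x u b := by
        have hmem := mem_varSums x 1 (t := fun i => max (t i) u) (n := n)
          (fun i j hij => max_le_max (ht hij) le_rfl)
          (by show max (t 0) u = u; rw [h0]; exact max_eq_right hau)
          (by show max (t n) u = b; rw [hn]; exact max_eq_left hub)
        have := le_csSup (bddAbove_sub hb hau le_rfl) hmem
        simpa [Real.rpow_one, VarI] using this
      exact add_le_add m1 m2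

end SigAux
namespace SigAux

open Set Finset

variable {E : Type*} [NormedAddCommGroup E]

theorem varSums_reflect (x : ℝ → E) (c : ℝ) {u v : ℝ} :
    varSums x 1 u v ⊆ varSums (fun s => x (c - s)) 1 (c - v) (c - u) := by
  rintro s ⟨n, t, ht, h0, hn, rfl⟩
  refine ⟨n, fun i => c - t (n - i), ?_,
    by show c - t (n - 0) = c - v; rw [Nat.sub_zero, hn],
    by show c - t (n - n) = c - u; rw [Nat.sub_self, h0], ?_⟩
  · intro i j hij
    have : t (n - j) ≤ t (n - i) := ht (by omega)
    simp only
    linarith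
  · have hterm : ∀ i ∈ Finset.range n,
        ‖x (c - (c - t (n - (i + 1)))) - x (c - (c - t (n - i)))‖ ^ (1:ℝ)
          = (fun j => ‖x (t (j + 1)) - x (t j)‖ ^ (1:ℝ)) (n - 1 - i) := by
      intro i hi
      simp only [Finset.mem_range] at hi
      have e1 : c - (c - t (n - (i + 1))) = t (n - 1 - i) := by
        have : n - (i + 1) = n - 1 - i := by omega
        rw [this]; ring_nf
      have e2 : c - (c - t (n - i)) = t (n - 1 - i + 1) := by
        have : n - i = n - 1 - i + 1 := by omega
        rw [this]; ring_nf
      rw [e1, e2, norm_sub_rev]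
    symm
    rw [Finset.sum_congr rfl hterm]
    exact Finset.sum_range_reflect (fun j => ‖x (t (j + 1)) - x (t j)‖ ^ (1:ℝ)) n

theorem varSums_reflect_eq (x : ℝ → E) (c : ℝ) {u v : ℝ} :
    varSums (fun s => x (c - s)) 1 (c - v) (c - u) = varSums x 1 u v := by
  apply Set.Subset.antisymm
  · have h := varSums_reflect (fun s => x (c - s)) c (u := c - v) (v := c - u)
    have e0 : (fun s => x (c - (c - s))) = x := funext fun s => by ring_nf
    have e1 : c - (c - u) = u := by ring
    have e2 : c - (c - v) = v := by ring
    rw [e0, e1, e2] at h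
    exact h
  · exact varSums_reflect x c

theorem VarI_reflect (x : ℝ → E) (c : ℝ) {u v : ℝ} :
    VarI (fun s => x (c - s)) (c - v) (c - u) = VarI x u v := by
  unfold VarI
  rw [varSums_reflect_eq]

/-- Key step for continuity of the variation function: small variation just to the right. -/
theorem exists_small_var_right {x : ℝ → E} {a b : ℝ} (hx : ContinuousOn x (Icc a b))
    (hb : BddAbove (varSums x 1 a b)) {t₀ : ℝ} (ht₀ : t₀ ∈ Icc a b) (ht₀b : t₀ < b)
    {ε : ℝ} (hε : 0 < ε) : ∃ u, t₀ < u ∧ u ≤ b ∧ VarI x t₀ u ≤ ε := by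
  obtain ⟨ha0, _⟩ := ht₀
  have hbddW : BddAbove (varSums x 1 t₀ b) := bddAbove_sub hb ha0 le_rfl
  by_cases hWε : VarI x t₀ b ≤ ε
  · exact ⟨b, ht₀b, le_rfl, hWε⟩
  push_neg at hWε
  set W := VarI x t₀ b with hWdef
  have hW3 : W - ε / 3 < sSup (varSums x 1 t₀ b) := by
    have hWs : sSup (varSums x 1 t₀ b) = W := rfl
    rw [hWs]; linarith
  obtain ⟨S, hSmem, hSgt⟩ := exists_lt_of_lt_csSup (varSums_nonempty x 1 ht₀b.le) hW3
  obtain ⟨n, t, ht, h0, hn, rfl⟩ := hSmem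
  simp only [Real.rpow_one] at hSgt
  have hcont := hx t₀ ⟨ha0, ht₀b.le⟩
  rw [Metric.continuousWithinAt_iff] at hcont
  obtain ⟨δ, hδ, hδ'⟩ := hcont (ε / 3) (by linarith)
  classical
  have hex : ∃ i, t₀ < t i := ⟨n, by rw [hn]; exact ht₀b⟩
  set i₀ := Nat.find hex with hi₀
  have hti₀ : t₀ < t i₀ := Nat.find_spec hex
  have hi₀n : i₀ ≤ n := Nat.find_min' hex (by rw [hn]; exact ht₀b)
  have htlt : ∀ j, j < i₀ → t j = t₀ := by
    intro j hj
    exact le_antisymm (not_lt.mp (Nat.find_min hex hj)) (h0 ▸ ht (Nat.zero_le j))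
  have hi₀pos : 1 ≤ i₀ := by
    by_contra hcon
    have : i₀ = 0 := by omega
    rw [this] at hti₀; rw [h0] at hti₀; exact lt_irrefl _ hti₀
  set u := min (t i₀) (t₀ + δ / 2) with hu
  have hut₀ : t₀ < u := lt_min hti₀ (by linarith)
  have hub : u ≤ b := le_trans (min_le_left _ _) (by rw [← hn]; exact ht hi₀n)
  refine ⟨u, hut₀, hub, ?_⟩
  set w := fun i => max (t i) u with hw
  have hwmono : Monotone w := fun i j h => max_le_max (ht h) le_rfl
  have hw0 : w 0 = u := by rw [hw]; simp only; rw [h0]; exact max_eq_right hut₀.le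
  have hwn : w n = b := by rw [hw]; simp only; rw [hn]; exact max_eq_left hub
  have hterm : ∀ i ∈ Finset.range n, ‖x (t (i + 1)) - x (t i)‖
      ≤ ‖x (w (i + 1)) - x (w i)‖ + (if i + 1 = i₀ then ε / 3 else 0) := by
    intro i hi
    simp only [Finset.mem_range] at hi
    rcases lt_trichotomy (i + 1) i₀ with hlt | heq | hgt
    · rw [htlt _ hlt, htlt _ (by omega)]
      simp only [sub_self, norm_zero]
      positivity
    · rw [if_pos heq]
      have hti : t i = t₀ := htlt i (by omega)
      have hwi : w i = u := by rw [hw]; simp only; rw [hti]; exact max_eq_right hut₀.le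
      have hwi1 : w (i + 1) = t (i + 1) := by
        rw [hw]; simp only; rw [heq]; exact max_eq_left (min_le_left _ _)
      have hdist : ‖x u - x t₀‖ ≤ ε / 3 := by
        have humem : u ∈ Icc a b := ⟨le_trans ha0 hut₀.le, hub⟩
        have hd : dist u t₀ < δ := by
          rw [Real.dist_eq, abs_of_nonneg (by linarith)]
          have := min_le_right (t i₀) (t₀ + δ / 2)
          have : u ≤ t₀ + δ / 2 := this
          linarith
        have := hδ' humem hd
        rw [dist_eq_norm] at this
        linarith
      have htri := norm_sub_le_norm_sub_add_norm_sub (x (t (i + 1))) (x u) (x t₀)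
      rw [hti, hwi, hwi1]
      linarith
    · rw [if_neg (by omega)]
      have h1 : u ≤ t i := le_trans (min_le_left _ _) (ht (by omega))
      have h2 : u ≤ t (i + 1) := le_trans h1 (ht (by omega))
      rw [hw]; simp only
      rw [max_eq_left h1, max_eq_left h2]
      simp
  have hifsum : (∑ i ∈ Finset.range n, if i + 1 = i₀ then ε / 3 else 0) ≤ ε / 3 := by
    have hcongr : ∀ i ∈ Finset.range n, (if i + 1 = i₀ then ε / 3 else 0)
        = (if i = i₀ - 1 then ε / 3 else 0) := by
      intro i _
      congr 1
      simp only [eq_iff_iff]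
      omega
    rw [Finset.sum_congr rfl hcongr, Finset.sum_ite_eq' (Finset.range n) (i₀ - 1)]
    split
    · exact le_rfl
    · linarith
  have hsum : ∑ i ∈ Finset.range n, ‖x (t (i + 1)) - x (t i)‖
      ≤ (∑ i ∈ Finset.range n, ‖x (w (i + 1)) - x (w i)‖) + ε / 3 := by
    calc ∑ i ∈ Finset.range n, ‖x (t (i + 1)) - x (t i)‖
        ≤ ∑ i ∈ Finset.range n, (‖x (w (i + 1)) - x (w i)‖ + if i + 1 = i₀ then ε / 3 else 0) :=
          Finset.sum_le_sum hterm
      _ = (∑ i ∈ Finset.range n, ‖x (w (i + 1)) - x (w i)‖)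
          + ∑ i ∈ Finset.range n, (if i + 1 = i₀ then ε / 3 else 0) := Finset.sum_add_distrib
      _ ≤ _ := by linarith
  have hwvar : (∑ i ∈ Finset.range n, ‖x (w (i + 1)) - x (w i)‖) ≤ VarI x u b := by
    have hmem := mem_varSums x 1 hwmono hw0 hwn
    have := le_csSup (bddAbove_sub hb (ha0.trans hut₀.le) le_rfl) hmem
    simpa [Real.rpow_one, VarI] using this
  have hsuper := VarI_superadd hbddW hut₀.le hub
  linarith

theorem exists_small_var_left {x : ℝ → E} {a b : ℝ} (hx : ContinuousOn x (Icc a b))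
    (hb : BddAbove (varSums x 1 a b)) {t₀ : ℝ} (ht₀ : t₀ ∈ Icc a b) (hat₀ : a < t₀)
    {ε : ℝ} (hε : 0 < ε) : ∃ u, a ≤ u ∧ u < t₀ ∧ VarI x u t₀ ≤ ε := by
  obtain ⟨ha0, hb0⟩ := ht₀
  set c := a + t₀ with hc
  set x' : ℝ → E := fun s => x (c - s) with hx'
  have hx'cont : ContinuousOn x' (Icc a t₀) := by
    apply hx.comp (Continuous.continuousOn (by continuity))
    intro s hs
    constructor
    · simp only [hc]; linarith [hs.2]
    · simp only [hc]; linarith [hs.1]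
  have hx'bdd : BddAbove (varSums x' 1 a t₀) := by
    have e1 : c - t₀ = a := by rw [hc]; ring
    have e2 : c - a = t₀ := by rw [hc]; ring
    have := varSums_reflect_eq x c (u := a) (v := t₀)
    rw [e1, e2] at this
    rw [this]
    exact bddAbove_sub hb le_rfl hb0
  obtain ⟨u', hau', hu't₀, hvar⟩ :=
    exists_small_var_right hx'cont hx'bdd (t₀ := a) ⟨le_rfl, hat₀.le⟩ hat₀ hε
  refine ⟨c - u', by simp only [hc]; linarith, by simp only [hc]; linarith, ?_⟩
  have := VarI_reflect x c (u := c - u') (v := t₀)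
  have e1 : c - t₀ = a := by rw [hc]; ring
  have e2 : c - (c - u') = u' := by ring
  rw [e1, e2] at this
  rw [← this]
  exact hvar

theorem continuousOn_VarI {x : ℝ → E} {a b : ℝ} (hx : ContinuousOn x (Icc a b))
    (hb : BddAbove (varSums x 1 a b)) :
    ContinuousOn (fun t => VarI x a t) (Icc a b) := by
  intro t₀ ht₀
  rw [Metric.continuousWithinAt_iff]
  intro ε hε
  obtain ⟨ha0, hb0⟩ := ht₀
  have hright : ∃ δr > 0, ∀ t ∈ Icc a b, t₀ ≤ t → t - t₀ < δr →
      |VarI x a t - VarI x a t₀| < ε := by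
    rcases lt_or_ge t₀ b with hlt | hge
    · obtain ⟨u, hu1, hu2, hu3⟩ := exists_small_var_right hx hb ⟨ha0, hb0⟩ hlt (half_pos hε)
      refine ⟨u - t₀, by linarith, ?_⟩
      intro t ht htt hlt'
      have hsub := VarI_subadd (bddAbove_sub hb le_rfl ht.2) ha0 htt
      have hm : VarI x t₀ t ≤ VarI x t₀ u :=
        VarI_mono_right (bddAbove_sub hb ha0 le_rfl) htt (by linarith) hu2
      have hnn : VarI x a t₀ ≤ VarI x a t := VarI_mono_right hb ha0 htt ht.2
      rw [abs_of_nonneg (by linarith)]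
      linarith
    · refine ⟨1, one_pos, ?_⟩
      intro t ht htt _
      have het : t = t₀ := le_antisymm (ht.2.trans hge) htt
      rw [het]
      simpa using hε
  have hleft : ∃ δl > 0, ∀ t ∈ Icc a b, t ≤ t₀ → t₀ - t < δl →
      |VarI x a t - VarI x a t₀| < ε := by
    rcases lt_or_ge a t₀ with hlt | hge
    · obtain ⟨u, hu1, hu2, hu3⟩ := exists_small_var_left hx hb ⟨ha0, hb0⟩ hlt (half_pos hε)
      refine ⟨t₀ - u, by linarith, ?_⟩
      intro t ht htt hlt'
      have hut : u ≤ t := by linarith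
      have hsub := VarI_subadd (bddAbove_sub hb le_rfl hb0) ht.1 htt
      have hm : VarI x t t₀ ≤ VarI x u t₀ :=
        VarI_mono_left (bddAbove_sub hb hu1 hb0) le_rfl hut htt
      have hnn : VarI x a t ≤ VarI x a t₀ := VarI_mono_right hb ht.1 htt hb0
      rw [abs_of_nonpos (by linarith), neg_sub]
      linarith
    · refine ⟨1, one_pos, ?_⟩
      intro t ht htt _
      have het : t = t₀ := le_antisymm htt (hge.trans ht.1)
      rw [het]
      simpa using hε
  obtain ⟨δr, hδr, hr⟩ := hright
  obtain ⟨δl, hδl, hl⟩ := hleft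
  refine ⟨min δr δl, lt_min hδr hδl, ?_⟩
  intro t ht hd
  rw [Real.dist_eq] at hd
  rw [Real.dist_eq]
  rcases le_total t₀ t with hc | hc
  · exact hr t ht hc (by rw [abs_of_nonneg (by linarith)] at hd; exact lt_of_lt_of_le hd (min_le_left _ _))
  · exact hl t ht hc (by rw [abs_of_nonpos (by linarith)] at hd; simp only [neg_sub] at hd; exact lt_of_lt_of_le hd (min_le_right _ _))

end SigAux
namespace SigAux

open Set Finset Filter Topology

/-- Left-tagged Riemann–Stieltjes sum along a partition. -/
def rsum (F G : ℝ → ℝ) (t : ℕ → ℝ) (n : ℕ) : ℝ :=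
  ∑ i ∈ Finset.range n, F (t i) * (G (t (i + 1)) - G (t i))

/-- `V` is a (pairwise) control for `G` on `[a,b]`. -/
def Ctrl (G V : ℝ → ℝ) (a b : ℝ) : Prop :=
  ∀ s t, a ≤ s → s ≤ t → t ≤ b → |G t - G s| ≤ V t - V s

theorem Ctrl.mono {G V : ℝ → ℝ} {a b a' b' : ℝ} (h : Ctrl G V a b) (ha : a ≤ a') (hb : b' ≤ b) :
    Ctrl G V a' b' := fun s t h1 h2 h3 => h s t (ha.trans h1) h2 (h3.trans hb)

theorem clamp_step (G : ℝ → ℝ) {pi pi1 uj uj1 : ℝ} (hp : pi ≤ pi1) (hu : uj ≤ uj1) :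
    G (min pi1 uj1) - G (min (max pi uj) (min pi1 uj1))
      = G (min (max pi uj1) pi1) - G (min (max pi uj) pi1) := by
  rcases lt_or_ge uj1 pi with hB | hB'
  · have e1 : min pi1 uj1 = uj1 := min_eq_right (le_trans hB.le hp)
    have e2 : max pi uj = pi := max_eq_left (le_trans hu hB.le)
    have e3 : max pi uj1 = pi := max_eq_left hB.le
    rw [e1, e2, e3, min_eq_right hB.le, min_eq_left hp]
    simp
  · rcases lt_or_ge pi1 uj with hC | hC'
    · have e1 : min pi1 uj1 = pi1 := min_eq_left (le_trans hC.le hu)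
      have e2 : min (max pi uj) pi1 = pi1 :=
        min_eq_right (le_trans hC.le (le_max_right _ _))
      have e3 : min (max pi uj1) pi1 = pi1 :=
        min_eq_right (le_trans (le_trans hC.le hu) (le_max_right _ _))
      rw [e1, e2, e3]
    · have e1 : max pi uj1 = uj1 := max_eq_right hB'
      have hXU : max pi uj ≤ uj1 := max_le hB' hu
      have e2 : min (max pi uj) (min pi1 uj1) = min (max pi uj) pi1 := by
        rw [min_comm pi1 uj1, ← min_assoc, min_eq_left hXU]
      rw [e1, e2, min_comm uj1 pi1]

theorem sum_grid (G : ℝ → ℝ) {u : ℕ → ℝ} {N : ℕ} (hu : Monotone u) {a c : ℝ}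
    (hu0 : u 0 = a) (huN : u N = c) {pi pi1 : ℝ} (hpi : pi ≤ pi1) (hapi : a ≤ pi)
    (hpic : pi1 ≤ c) :
    ∑ j ∈ Finset.range N,
        (G (min pi1 (u (j + 1))) - G (min (max pi (u j)) (min pi1 (u (j + 1)))))
      = G pi1 - G pi := by
  have hcongr : ∀ j ∈ Finset.range N,
      (G (min pi1 (u (j + 1))) - G (min (max pi (u j)) (min pi1 (u (j + 1)))))
        = (fun j => G (min (max pi (u j)) pi1)) (j + 1) - (fun j => G (min (max pi (u j)) pi1)) j :=
    fun j _ => clamp_step G hpi (hu (Nat.le_succ j))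
  rw [Finset.sum_congr rfl hcongr, Finset.sum_range_sub (fun j => G (min (max pi (u j)) pi1)) N]
  show G (min (max pi (u N)) pi1) - G (min (max pi (u 0)) pi1) = G pi1 - G pi
  rw [hu0, huN, max_eq_right (hpi.trans hpic), min_eq_right hpic, max_eq_left hapi,
    min_eq_left hpi]

/-- Master two-partition comparison estimate. -/
theorem rsum_diff_le {F G V : ℝ → ℝ} {a c : ℝ} {p u : ℕ → ℝ} {r N : ℕ}
    (hp : Monotone p) (hp0 : p 0 = a) (hpr : p r = c)
    (hu : Monotone u) (hu0 : u 0 = a) (huN : u N = c)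
    (hV : Ctrl G V a c) {δp δu ε : ℝ} (hε : 0 ≤ ε)
    (hmp : ∀ i < r, p (i + 1) - p i ≤ δp) (hmu : ∀ j < N, u (j + 1) - u j ≤ δu)
    (hFmod : ∀ s t, a ≤ s → s ≤ c → a ≤ t → t ≤ c → |s - t| ≤ δp + δu → |F s - F t| ≤ ε) :
    |rsum F G p r - rsum F G u N| ≤ ε * (V c - V a) := by
  have hpmem : ∀ i, i ≤ r → a ≤ p i ∧ p i ≤ c := fun i hi =>
    ⟨hp0 ▸ hp (Nat.zero_le i), hpr ▸ hp hi⟩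
  have humem : ∀ j, j ≤ N → a ≤ u j ∧ u j ≤ c := fun j hj =>
    ⟨hu0 ▸ hu (Nat.zero_le j), huN ▸ hu hj⟩
  set g : ℕ → ℕ → ℝ := fun i j =>
    G (min (p (i + 1)) (u (j + 1))) - G (min (max (p i) (u j)) (min (p (i + 1)) (u (j + 1))))
    with hg
  set vg : ℕ → ℕ → ℝ := fun i j =>
    V (min (p (i + 1)) (u (j + 1))) - V (min (max (p i) (u j)) (min (p (i + 1)) (u (j + 1))))
    with hvg
  have e1 : rsum F G p r = ∑ i ∈ Finset.range r, ∑ j ∈ Finset.range N, F (p i) * g i j := by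
    unfold rsum
    refine Finset.sum_congr rfl fun i hi => ?_
    simp only [Finset.mem_range] at hi
    rw [← Finset.mul_sum, hg]
    congr 1
    exact (sum_grid G hu hu0 huN (hp (Nat.le_succ i)) (hpmem i (by omega)).1
      (hpmem (i + 1) (by omega)).2).symm
  have e2 : rsum F G u N = ∑ i ∈ Finset.range r, ∑ j ∈ Finset.range N, F (u j) * g i j := by
    rw [Finset.sum_comm]
    unfold rsum
    refine Finset.sum_congr rfl fun j hj => ?_
    simp only [Finset.mem_range] at hj
    rw [← Finset.mul_sum, hg]
    congr 1
    have := sum_grid G hp hp0 hpr (hu (Nat.le_succ j)) (humem j (by omega)).1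
      (humem (j + 1) (by omega)).2
    rw [← this]
    refine (Finset.sum_congr rfl fun i _ => ?_).symm
    rw [min_comm (u (j + 1)) (p (i + 1)), max_comm (u j) (p i)]
  have e3 : rsum F G p r - rsum F G u N
      = ∑ i ∈ Finset.range r, ∑ j ∈ Finset.range N, (F (p i) - F (u j)) * g i j := by
    rw [e1, e2, ← Finset.sum_sub_distrib]
    refine Finset.sum_congr rfl fun i _ => ?_
    rw [← Finset.sum_sub_distrib]
    refine Finset.sum_congr rfl fun j _ => ?_
    ring
  have hvg_nonneg : ∀ i j, i < r → j < N → |g i j| ≤ vg i j := by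
    intro i j hi hj
    have h1 : a ≤ max (p i) (u j) := le_trans (hpmem i (by omega)).1 (le_max_left _ _)
    have h2 : a ≤ min (p (i + 1)) (u (j + 1)) :=
      le_min (hpmem (i + 1) (by omega)).1 (humem (j + 1) (by omega)).1
    have h3 : min (p (i + 1)) (u (j + 1)) ≤ c :=
      le_trans (min_le_left _ _) (hpmem (i + 1) (by omega)).2
    exact hV _ _ (le_min h1 h2) (min_le_right _ _) h3
  have key : ∀ i ∈ Finset.range r, ∀ j ∈ Finset.range N,
      |(F (p i) - F (u j)) * g i j| ≤ ε * vg i j := by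
    intro i hi j hj
    simp only [Finset.mem_range] at hi hj
    rw [abs_mul]
    have hgv := hvg_nonneg i j hi hj
    have hvgnn : 0 ≤ vg i j := le_trans (abs_nonneg _) hgv
    by_cases hov : p i ≤ u (j + 1) ∧ u j ≤ p (i + 1)
    · have hδp : 0 ≤ δp := le_trans (by linarith [hp (Nat.le_succ i)] : (0:ℝ) ≤ p (i+1) - p i) (hmp i hi)
      have hδu : 0 ≤ δu := le_trans (by linarith [hu (Nat.le_succ j)] : (0:ℝ) ≤ u (j+1) - u j) (hmu j hj)
      have habs : |p i - u j| ≤ δp + δu := by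
        have h1 := hmu j hj
        have h2 := hmp i hi
        have h3 := hov.1
        have h4 := hov.2
        rw [abs_le]
        constructor <;> linarith
      have hFb := hFmod (p i) (u j) (hpmem i (by omega)).1 (hpmem i (by omega)).2
        (humem j (by omega)).1 (humem j (by omega)).2 habs
      exact mul_le_mul hFb hgv (abs_nonneg _) hε
    · have hg0 : g i j = 0 := by
        rw [hg]
        simp only
        rcases not_and_or.mp hov with h | h
        · push_neg at h
          have e1 : min (p (i + 1)) (u (j + 1)) = u (j + 1) :=
            min_eq_right (le_trans h.le (hp (Nat.le_succ i)))
          have e2 : max (p i) (u j) = p i := max_eq_left (le_trans (hu (Nat.le_succ j)) h.le)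
          rw [e1, e2, min_eq_right h.le, sub_self]
        · push_neg at h
          have e1 : min (p (i + 1)) (u (j + 1)) = p (i + 1) :=
            min_eq_left (le_trans h.le (hu (Nat.le_succ j)))
          have e2 : min (max (p i) (u j)) (p (i + 1)) = p (i + 1) :=
            min_eq_right (le_trans h.le (le_max_right _ _))
          rw [e1, e2, sub_self]
      rw [hg0, abs_zero, mul_zero]
      positivity
  have habs : |rsum F G p r - rsum F G u N|
      ≤ ∑ i ∈ Finset.range r, ∑ j ∈ Finset.range N, ε * vg i j := by
    rw [e3]
    refine le_trans (Finset.abs_sum_le_sum_abs _ _) (Finset.sum_le_sum fun i hi => ?_)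
    exact le_trans (Finset.abs_sum_le_sum_abs _ _) (Finset.sum_le_sum fun j hj => key i hi j hj)
  have htot : ∑ i ∈ Finset.range r, ∑ j ∈ Finset.range N, vg i j = V c - V a := by
    have hrow : ∀ i ∈ Finset.range r,
        ∑ j ∈ Finset.range N, vg i j = V (p (i + 1)) - V (p i) := by
      intro i hi
      simp only [Finset.mem_range] at hi
      rw [hvg]
      exact sum_grid V hu hu0 huN (hp (Nat.le_succ i)) (hpmem i (by omega)).1
        (hpmem (i + 1) (by omega)).2
    rw [Finset.sum_congr rfl hrow, Finset.sum_range_sub (fun i => V (p i)) r, hp0, hpr]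
  calc |rsum F G p r - rsum F G u N| ≤ ∑ i ∈ Finset.range r, ∑ j ∈ Finset.range N, ε * vg i j :=
      habs
    _ = ε * (V c - V a) := by
      rw [← htot, Finset.mul_sum]
      exact Finset.sum_congr rfl fun i _ => by rw [Finset.mul_sum]

/-- Clamped uniform partition of `[a,c]` into `n` pieces. -/
def unifP (a c : ℝ) (n : ℕ) : ℕ → ℝ := fun i => a + (min i n : ℕ) * (c - a) / n

theorem unifP_monotone {a c : ℝ} (hac : a ≤ c) (n : ℕ) : Monotone (unifP a c n) := by
  intro i j hij
  unfold unifP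
  have h1 : ((min i n : ℕ) : ℝ) ≤ ((min j n : ℕ) : ℝ) := by
    exact_mod_cast Nat.cast_le.mpr (min_le_min hij le_rfl)
  have h2 : (0:ℝ) ≤ (c - a) / n := div_nonneg (sub_nonneg.2 hac) (Nat.cast_nonneg n)
  have h3 := mul_le_mul_of_nonneg_right h1 h2
  rw [mul_div_assoc'] at h3
  rw [mul_div_assoc'] at h3
  linarith

theorem unifP_zero (a c : ℝ) (n : ℕ) : unifP a c n 0 = a := by
  unfold unifP; simp

theorem unifP_last (a c : ℝ) {n : ℕ} (hn : 1 ≤ n) : unifP a c n n = c := by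
  unfold unifP
  rw [min_self]
  have hn0 : (n:ℝ) ≠ 0 := Nat.cast_ne_zero.mpr (by omega)
  field_simp
  ring

theorem unifP_mesh {a c : ℝ} (n : ℕ) {i : ℕ} (hi : i < n) :
    unifP a c n (i + 1) - unifP a c n i = (c - a) / n := by
  unfold unifP
  rw [min_eq_left (by omega : i + 1 ≤ n), min_eq_left (by omega : i ≤ n)]
  push_cast
  ring

theorem unifP_eq {a c : ℝ} (n : ℕ) {i : ℕ} (hi : i ≤ n) :
    unifP a c n i = a + i * (c - a) / n := by
  unfold unifP
  rw [min_eq_left hi]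

theorem rsSum_eq_rsum (F G : ℝ → ℝ) (a c : ℝ) (n : ℕ) :
    rsSum F G a c n = rsum F G (unifP a c n) n := by
  unfold rsSum rsum
  refine Finset.sum_congr rfl fun i hi => ?_
  simp only [Finset.mem_range] at hi
  rw [unifP_eq n (by omega : i ≤ n), unifP_eq n (by omega : i + 1 ≤ n)]
  push_cast
  ring_nf

theorem tendsto_rsSum {F G V : ℝ → ℝ} {a c : ℝ} (hac : a ≤ c)
    (hF : ContinuousOn F (Icc a c)) (hV : Ctrl G V a c) :
    Tendsto (rsSum F G a c) atTop (𝓝 (rsInt F G a c)) := by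
  have hVtot : 0 ≤ V c - V a := le_trans (abs_nonneg _) (hV a c le_rfl hac le_rfl)
  obtain ⟨I, hI⟩ : ∃ I, Tendsto (rsSum F G a c) atTop (𝓝 I) := by
    apply cauchySeq_tendsto_of_complete
    rw [Metric.cauchySeq_iff]
    intro ε hε
    have hucF := isCompact_Icc.uniformContinuousOn_of_continuous hF
    rw [Metric.uniformContinuousOn_iff] at hucF
    obtain ⟨δ, hδ0, hδ⟩ := hucF (ε / (2 * (V c - V a + 1))) (by positivity)
    obtain ⟨N₀, hN₀⟩ := exists_nat_gt (4 * (c - a) / δ)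
    refine ⟨max N₀ 1, fun m hm n hn => ?_⟩
    have hm1 : 1 ≤ m := le_trans (le_max_right _ _) hm
    have hn1 : 1 ≤ n := le_trans (le_max_right _ _) hn
    have hmesh : ∀ (k : ℕ), N₀ ≤ k → 1 ≤ k → (c - a) / k ≤ δ / 3 := by
      intro k hk hk1
      rw [div_le_iff₀ (by exact_mod_cast (by omega : 0 < k))]
      have hkr : (N₀:ℝ) ≤ k := Nat.cast_le.mpr hk
      have h4 : 4 * (c - a) / δ < (k:ℝ) := lt_of_lt_of_le hN₀ hkr
      rw [div_lt_iff₀ hδ0] at h4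
      nlinarith [hδ0, sub_nonneg.mpr hac]
    rw [Real.dist_eq, rsSum_eq_rsum, rsSum_eq_rsum]
    have hm3 : (c - a) / m ≤ δ / 3 := hmesh m (le_trans (le_max_left _ _) hm) hm1
    have hn3 : (c - a) / n ≤ δ / 3 := hmesh n (le_trans (le_max_left _ _) hn) hn1
    have hest := rsum_diff_le (F := F) (G := G) (V := V)
      (δp := (c - a) / m) (δu := (c - a) / n)
      (unifP_monotone hac m) (unifP_zero a c m) (unifP_last a c hm1)
      (unifP_monotone hac n) (unifP_zero a c n) (unifP_last a c hn1)
      hV (by positivity : (0:ℝ) ≤ ε / (2 * (V c - V a + 1)))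
      (fun i hi => le_of_eq (unifP_mesh m hi))
      (fun j hj => le_of_eq (unifP_mesh n hj))
      (fun s t hs1 hs2 ht1 ht2 hst => by
        have hd : dist s t < δ := by
          rw [Real.dist_eq]
          linarith
        exact (hδ s ⟨hs1, hs2⟩ t ⟨ht1, ht2⟩ hd).le)
    refine lt_of_le_of_lt hest ?_
    have hfe : ε / (2 * (V c - V a + 1)) * (V c - V a + 1) = ε / 2 := by
      field_simp
    have hε' : 0 < ε / (2 * (V c - V a + 1)) := by positivity
    nlinarith [hε, hVtot]
  have : limUnder atTop (rsSum F G a c) = I := hI.limUnder_eq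
  rw [rsInt, this]
  exact hI

theorem rsum_sub_rsInt_le {F G V : ℝ → ℝ} {a c : ℝ} (hac : a ≤ c)
    (hF : ContinuousOn F (Icc a c)) (hV : Ctrl G V a c)
    {t : ℕ → ℝ} {n : ℕ} (htm : Monotone t) (ht0 : t 0 = a) (htn : t n = c)
    {δp ε : ℝ} (hε : 0 ≤ ε) (hmesh : ∀ i < n, t (i + 1) - t i ≤ δp)
    (hmod : ∃ δ₂ > 0, ∀ s u', a ≤ s → s ≤ c → a ≤ u' → u' ≤ c →
      |s - u'| ≤ δp + δ₂ → |F s - F u'| ≤ ε) :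
    |rsum F G t n - rsInt F G a c| ≤ ε * (V c - V a) := by
  obtain ⟨δ₂, hδ₂, hmod⟩ := hmod
  have hlim := tendsto_rsSum hac hF hV
  have hev : ∀ᶠ m in atTop, |rsum F G t n - rsSum F G a c m| ≤ ε * (V c - V a) := by
    filter_upwards [eventually_ge_atTop (max 1 (⌈(c - a) / δ₂⌉₊ + 1))] with m hm
    have hm1 : 1 ≤ m := le_trans (le_max_left _ _) hm
    have hmc : (⌈(c - a) / δ₂⌉₊ + 1 : ℕ) ≤ m := le_trans (le_max_right _ _) hm
    have hmeshu : ∀ j < m, unifP a c m (j + 1) - unifP a c m j ≤ δ₂ := by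
      intro j hj
      rw [unifP_mesh m hj]
      rw [div_le_iff₀ (by exact_mod_cast (by omega : 0 < m))]
      have h1 : (c - a) / δ₂ ≤ ⌈(c - a) / δ₂⌉₊ := Nat.le_ceil _
      have h2 : ((⌈(c - a) / δ₂⌉₊ : ℝ) + 1) ≤ (m : ℝ) := by exact_mod_cast hmc
      rw [div_le_iff₀ hδ₂] at h1
      nlinarith [hδ₂]
    rw [rsSum_eq_rsum]
    exact rsum_diff_le htm ht0 htn (unifP_monotone hac m) (unifP_zero a c m)
      (unifP_last a c hm1) hV hε hmesh hmeshu
      (fun s u' hs1 hs2 hu1 hu2 hsu => hmod s u' hs1 hs2 hu1 hu2 hsu)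
  have h2 : Tendsto (fun m => |rsum F G t n - rsSum F G a c m|) atTop
      (𝓝 |rsum F G t n - rsInt F G a c|) := (tendsto_const_nhds.sub hlim).abs
  exact le_of_tendsto h2 hev

/-- Convergence of Riemann–Stieltjes sums along any family of partitions with mesh → 0. -/
theorem tendsto_rsum_of_mesh {F G V : ℝ → ℝ} {a c : ℝ} (hac : a ≤ c)
    (hF : ContinuousOn F (Icc a c)) (hV : Ctrl G V a c)
    {t : ℕ → ℕ → ℝ} {n : ℕ → ℕ}
    (htm : ∀ k, 1 ≤ k → Monotone (t k)) (ht0 : ∀ k, 1 ≤ k → t k 0 = a)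
    (htn : ∀ k, 1 ≤ k → t k (n k) = c)
    (hmesh : ∀ δ, 0 < δ → ∀ᶠ k in atTop, ∀ i < n k, t k (i + 1) - t k i ≤ δ) :
    Tendsto (fun k => rsum F G (t k) (n k)) atTop (𝓝 (rsInt F G a c)) := by
  have hVtot : 0 ≤ V c - V a := le_trans (abs_nonneg _) (hV a c le_rfl hac le_rfl)
  rw [Metric.tendsto_atTop]
  intro ε hε
  have hucF := isCompact_Icc.uniformContinuousOn_of_continuous hF
  rw [Metric.uniformContinuousOn_iff] at hucF
  obtain ⟨δ, hδ0, hδ⟩ := hucF (ε / (2 * (V c - V a + 1))) (by positivity)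
  obtain ⟨K, hK⟩ := (hmesh (δ / 3) (by positivity)).exists_forall_of_atTop
  refine ⟨max K 1, fun k hk => ?_⟩
  have hk1 : 1 ≤ k := le_trans (le_max_right _ _) hk
  have hkK : K ≤ k := le_trans (le_max_left _ _) hk
  have hb := rsum_sub_rsInt_le hac hF hV (htm k hk1) (ht0 k hk1) (htn k hk1)
    (by positivity : (0:ℝ) ≤ ε / (2 * (V c - V a + 1))) (hK k hkK)
    ⟨δ / 3, by positivity, fun s u' hs1 hs2 hu1 hu2 hsu => by
      have : dist s u' < δ := by
        rw [Real.dist_eq]; linarith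
      exact (hδ s ⟨hs1, hs2⟩ u' ⟨hu1, hu2⟩ this).le⟩
  rw [Real.dist_eq]
  refine lt_of_le_of_lt hb ?_
  have hfe : ε / (2 * (V c - V a + 1)) * (V c - V a + 1) = ε / 2 := by field_simp
  nlinarith [hε, hVtot]

theorem abs_rsInt_le {F G V : ℝ → ℝ} {a c C : ℝ} (hac : a ≤ c)
    (hF : ContinuousOn F (Icc a c)) (hV : Ctrl G V a c)
    (hC : ∀ s, a ≤ s → s ≤ c → |F s| ≤ C) :
    |rsInt F G a c| ≤ C * (V c - V a) := by
  have hlim := tendsto_rsSum hac hF hV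
  apply le_of_tendsto hlim.abs
  filter_upwards [eventually_ge_atTop 1] with n hn
  rw [rsSum_eq_rsum]
  have hmem : ∀ i, i ≤ n → a ≤ unifP a c n i ∧ unifP a c n i ≤ c := by
    intro i hi
    constructor
    · calc a = unifP a c n 0 := (unifP_zero a c n).symm
        _ ≤ unifP a c n i := unifP_monotone hac n (Nat.zero_le i)
    · calc unifP a c n i ≤ unifP a c n n := unifP_monotone hac n hi
        _ = c := unifP_last a c hn
  calc |rsum F G (unifP a c n) n|
      ≤ ∑ i ∈ Finset.range n, |F (unifP a c n i)| * |G (unifP a c n (i+1)) - G (unifP a c n i)| := by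
        refine le_trans (Finset.abs_sum_le_sum_abs _ _) (Finset.sum_le_sum fun i _ => ?_)
        rw [abs_mul]
    _ ≤ ∑ i ∈ Finset.range n, C * (V (unifP a c n (i+1)) - V (unifP a c n i)) := by
        refine Finset.sum_le_sum fun i hi => ?_
        simp only [Finset.mem_range] at hi
        have h1 := hC _ (hmem i (by omega)).1 (hmem i (by omega)).2
        have h2 := hV _ _ (hmem i (by omega)).1 (unifP_monotone hac n (Nat.le_succ i))
          (hmem (i+1) (by omega)).2
        have h3 : (0:ℝ) ≤ |G (unifP a c n (i+1)) - G (unifP a c n i)| := abs_nonneg _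
        have h0C : 0 ≤ C := le_trans (abs_nonneg _) h1
        nlinarith
    _ = C * (V c - V a) := by
        rw [← Finset.mul_sum, Finset.sum_range_sub (fun i => V (unifP a c n i)) n,
          unifP_zero, unifP_last a c hn]

theorem unifP_mem {a c : ℝ} (hac : a ≤ c) {n : ℕ} (hn : 1 ≤ n) (i : ℕ) :
    a ≤ unifP a c n i ∧ unifP a c n i ≤ c := by
  constructor
  · calc a = unifP a c n 0 := (unifP_zero a c n).symm
      _ ≤ unifP a c n i := unifP_monotone hac n (Nat.zero_le i)
  · have h1 : unifP a c n i ≤ unifP a c n (max i n) := unifP_monotone hac n (le_max_left _ _)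
    have h2 : unifP a c n (max i n) = unifP a c n n := by
      unfold unifP
      rw [min_eq_right (le_max_right _ _), min_self]
    rw [h2, unifP_last a c hn] at h1
    exact h1

theorem rsInt_add {F G V : ℝ → ℝ} {a s c : ℝ} (has : a ≤ s) (hsc : s ≤ c)
    (hF : ContinuousOn F (Icc a c)) (hV : Ctrl G V a c) :
    rsInt F G a c = rsInt F G a s + rsInt F G s c := by
  have hac : a ≤ c := has.trans hsc
  have hm1 : ∀ k : ℕ, 1 ≤ max k 1 := fun k => le_max_right _ _
  have hwm : ∀ k : ℕ, Monotone (joinSeq (unifP a s (max k 1)) (unifP s c (max k 1)) (max k 1)) :=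
    fun k => joinSeq_monotone (unifP_monotone has _) (unifP_monotone hsc _)
      (by rw [unifP_last a s (hm1 k), unifP_zero])
  have hw0 : ∀ k : ℕ, joinSeq (unifP a s (max k 1)) (unifP s c (max k 1)) (max k 1) 0 = a :=
    fun k => by rw [joinSeq_zero, unifP_zero]
  have hwn : ∀ k : ℕ, joinSeq (unifP a s (max k 1)) (unifP s c (max k 1)) (max k 1)
      (max k 1 + max k 1) = c :=
    fun k => joinSeq_last (unifP_last a s (hm1 k)) (unifP_zero s c _) (unifP_last s c (hm1 k))
  have hmesh : ∀ δ, 0 < δ → ∀ᶠ k in atTop, ∀ i < max k 1 + max k 1,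
      joinSeq (unifP a s (max k 1)) (unifP s c (max k 1)) (max k 1) (i + 1)
        - joinSeq (unifP a s (max k 1)) (unifP s c (max k 1)) (max k 1) i ≤ δ := by
    intro δ hδ
    obtain ⟨K, hK⟩ := exists_nat_gt ((c - a) / δ)
    filter_upwards [eventually_ge_atTop (K + 1)] with k hk
    set n' := max k 1 with hn'
    have hkK : (K : ℝ) ≤ n' := by
      have h1 : K + 1 ≤ n' := le_trans hk (le_max_left _ _)
      exact_mod_cast le_trans (by omega : K ≤ K + 1) h1
    have hn'0 : (0:ℝ) < n' := by
      have := hm1 k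
      exact_mod_cast (by omega : 0 < n')
    have hbound : (c - a) / (n' : ℝ) ≤ δ := by
      rw [div_le_iff₀ hn'0]
      rw [div_lt_iff₀ hδ] at hK
      nlinarith [sub_nonneg.mpr hac, hδ]
    have hb1 : (s - a) / (n' : ℝ) ≤ δ := le_trans (by gcongr <;> linarith) hbound
    have hb2 : (c - s) / (n' : ℝ) ≤ δ := le_trans (by gcongr <;> linarith) hbound
    intro i hi
    unfold joinSeq
    by_cases h1 : i + 1 ≤ n'
    · rw [if_pos (by omega : i ≤ n'), if_pos h1, unifP_mesh n' (by omega : i < n')]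
      exact hb1
    · by_cases h2 : i ≤ n'
      · have hin : i = n' := by omega
        rw [if_pos h2, if_neg h1, hin, unifP_last a s (hm1 k)]
        have e1 : n' + 1 - n' = 1 := by omega
        rw [e1]
        calc unifP s c n' 1 - s = unifP s c n' 1 - unifP s c n' 0 := by rw [unifP_zero]
          _ = (c - s) / n' := unifP_mesh n' (by omega : 0 < n')
          _ ≤ δ := hb2
      · rw [if_neg h2, if_neg h1]
        have e1 : i + 1 - n' = (i - n') + 1 := by omega
        rw [e1, unifP_mesh n' (by omega : i - n' < n')]
        exact hb2
  have hsum : ∀ k : ℕ, rsum F G (joinSeq (unifP a s (max k 1)) (unifP s c (max k 1)) (max k 1))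
      (max k 1 + max k 1) = rsSum F G a s (max k 1) + rsSum F G s c (max k 1) := by
    intro k
    have hj := joinSeq_sum (fun x y => F x * (G y - G x)) (t := unifP a s (max k 1))
      (s := unifP s c (max k 1)) (n := max k 1) (m := max k 1)
      (by rw [unifP_last a s (hm1 k), unifP_zero])
    rw [rsSum_eq_rsum, rsSum_eq_rsum]
    exact hj
  have h1 : Tendsto (fun k => rsum F G
      (joinSeq (unifP a s (max k 1)) (unifP s c (max k 1)) (max k 1)) (max k 1 + max k 1))
      atTop (𝓝 (rsInt F G a c)) :=
    tendsto_rsum_of_mesh hac hF hV (fun k _ => hwm k) (fun k _ => hw0 k)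
      (fun k _ => hwn k) hmesh
  have hmt : Tendsto (fun k : ℕ => max k 1) atTop atTop :=
    tendsto_atTop_mono (fun k => le_max_left k 1) tendsto_id
  have ha := (tendsto_rsSum has (hF.mono (Icc_subset_Icc le_rfl hsc))
    (hV.mono le_rfl hsc)).comp hmt
  have hb := (tendsto_rsSum hsc (hF.mono (Icc_subset_Icc has le_rfl))
    (hV.mono has le_rfl)).comp hmt
  have h2 := (ha.add hb).congr (fun k => (hsum k).symm)
  exact tendsto_nhds_unique h1 h2

end SigAux
namespace SigAux

open Set Finset Filter Topology

theorem coord_abs_le_norm {d : ℕ} (v : Vec d) (i : Fin d) : |v i| ≤ ‖v‖ := by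
  rw [EuclideanSpace.norm_eq]
  have h1 : |v i| = Real.sqrt (‖v i‖ ^ 2) := by
    rw [Real.sqrt_sq (norm_nonneg _), Real.norm_eq_abs]
  rw [h1]
  apply Real.sqrt_le_sqrt
  exact Finset.single_le_sum (fun j _ => sq_nonneg ‖v j‖) (Finset.mem_univ i)

/-- Admissible path: Lipschitz with constant `M` on `[a,b]`. -/
def Adm (d : ℕ) (M a b : ℝ) (x : ℝ → Vec d) : Prop :=
  ∀ s t, a ≤ s → s ≤ t → t ≤ b → ‖x t - x s‖ ≤ M * (t - s)

theorem Adm.ctrl {d : ℕ} {M a b : ℝ} {x : ℝ → Vec d} (h : Adm d M a b x) (i : Fin d) :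
    Ctrl (fun u => x u i) (fun u => M * u) a b := by
  intro s t h1 h2 h3
  have hc : |x t i - x s i| ≤ ‖x t - x s‖ := by
    have := coord_abs_le_norm (x t - x s) i
    simpa [PiLp.sub_apply] using this
  have h4 := h s t h1 h2 h3
  have : |x t i - x s i| ≤ M * (t - s) := hc.trans h4
  calc |(fun u => x u i) t - (fun u => x u i) s| = |x t i - x s i| := rfl
    _ ≤ M * (t - s) := this
    _ = M * t - M * s := by ring

theorem lip_continuousOn {f : ℝ → ℝ} {a b L : ℝ} (hL : 0 ≤ L)
    (h : ∀ s t, a ≤ s → s ≤ t → t ≤ b → |f t - f s| ≤ L * (t - s)) :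
    ContinuousOn f (Icc a b) := by
  intro t₀ ht₀
  rw [Metric.continuousWithinAt_iff]
  intro ε hε
  refine ⟨ε / (L + 1), by positivity, fun t ht hd => ?_⟩
  rw [Real.dist_eq] at hd
  rw [Real.dist_eq]
  have he : ε / (L + 1) * (L + 1) = ε := by field_simp
  have hepos : 0 < ε / (L + 1) := by positivity
  have hint := mul_le_mul_of_nonneg_left (le_of_lt hd) hL
  rcases le_total t₀ t with hc | hc
  · have h2 : |f t - f t₀| ≤ L * (t - t₀) := h t₀ t ht₀.1 hc ht.2
    have h3 : L * (t - t₀) ≤ L * |t - t₀| := by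
      have := le_abs_self (t - t₀)
      nlinarith
    nlinarith
  · have h2 : |f t₀ - f t| ≤ L * (t₀ - t) := h t t₀ ht.1 hc ht₀.2
    rw [abs_sub_comm]
    have h3 : L * (t₀ - t) ≤ L * |t - t₀| := by
      have := neg_abs_le (t - t₀)
      nlinarith
    nlinarith

theorem Adm.continuousOn {d : ℕ} {M a b : ℝ} {x : ℝ → Vec d} (hM : 0 ≤ M)
    (h : Adm d M a b x) : ContinuousOn x (Icc a b) := by
  intro t₀ ht₀
  rw [Metric.continuousWithinAt_iff]
  intro ε hε
  refine ⟨ε / (M + 1), by positivity, fun t ht hd => ?_⟩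
  rw [Real.dist_eq] at hd
  rw [dist_eq_norm]
  have he : ε / (M + 1) * (M + 1) = ε := by field_simp
  have hepos : 0 < ε / (M + 1) := by positivity
  rcases le_total t₀ t with hc | hc
  · have h2 := h t₀ t ht₀.1 hc ht.2
    have habs : t - t₀ < ε / (M + 1) := by
      have := le_abs_self (t - t₀); linarith
    have h3 : M * (t - t₀) ≤ M * (ε / (M + 1)) :=
      mul_le_mul_of_nonneg_left habs.le hM
    nlinarith
  · have h2 := h t t₀ ht.1 hc ht₀.2
    have habs : t₀ - t < ε / (M + 1) := by
      have := neg_abs_le (t - t₀); linarith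
    have h3 : M * (t₀ - t) ≤ M * (ε / (M + 1)) :=
      mul_le_mul_of_nonneg_left habs.le hM
    rw [← norm_neg, neg_sub]
    nlinarith

theorem sigWord_cons {d : ℕ} (x : ℝ → Vec d) (a : ℝ) (i : Fin d) (w : List (Fin d)) (t : ℝ) :
    sigWord x a (i :: w) t
      = rsInt (fun u => sigWord x a w u) (fun u => x u i) a t := rfl

theorem sigWord_nil {d : ℕ} (x : ℝ → Vec d) (a t : ℝ) : sigWord x a [] t = 1 := rfl

/-- Bounds and Lipschitz property of iterated integrals of admissible paths. -/
theorem sigWord_props {d : ℕ} {M a b : ℝ} (hab : a ≤ b) (hM : 0 ≤ M) {x : ℝ → Vec d}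
    (hx : Adm d M a b x) (w : List (Fin d)) :
    (∀ t, a ≤ t → t ≤ b → |sigWord x a w t| ≤ (1 + M * (b - a)) ^ w.length) ∧
    (∀ s t, a ≤ s → s ≤ t → t ≤ b →
      |sigWord x a w t - sigWord x a w s| ≤ (1 + M * (b - a)) ^ w.length * M * (t - s)) := by
  have hbase : (1:ℝ) ≤ 1 + M * (b - a) := by nlinarith [sub_nonneg.2 hab]
  induction w with
  | nil =>
    constructor
    · intro t _ _
      simp [sigWord_nil]
    · intro s t h1 h2 h3
      simp only [sigWord_nil, sub_self, abs_zero, List.length_nil, pow_zero, one_mul]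
      nlinarith
  | cons i w ih =>
    obtain ⟨ihB, ihL⟩ := ih
    have hFcont : ContinuousOn (fun u => sigWord x a w u) (Icc a b) :=
      lip_continuousOn (by positivity) ihL
    have hB : ∀ s, a ≤ s → s ≤ b → |sigWord x a w s| ≤ (1 + M * (b - a)) ^ w.length :=
      ihB
    have hpow : (0:ℝ) < (1 + M * (b - a)) ^ w.length := by positivity
    have hKey : ∀ s t, a ≤ s → s ≤ t → t ≤ b →
        |sigWord x a (i :: w) t - sigWord x a (i :: w) s|
          ≤ (1 + M * (b - a)) ^ w.length * M * (t - s) := by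
      intro s t h1 h2 h3
      rw [sigWord_cons, sigWord_cons]
      have hadd := rsInt_add (F := fun u => sigWord x a w u) (G := fun u => x u i)
        (V := fun u => M * u) h1 h2 (hFcont.mono (Icc_subset_Icc le_rfl h3))
        ((hx.ctrl i).mono le_rfl h3)
      rw [hadd, add_sub_cancel_left]
      have hbnd := abs_rsInt_le (a := s) (c := t) h2
        (hFcont.mono (Icc_subset_Icc h1 h3)) (((hx.ctrl i)).mono h1 h3)
        (fun u hu1 hu2 => hB u (h1.trans hu1) (hu2.trans h3))
      calc |rsInt (fun u => sigWord x a w u) (fun u => x u i) s t|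
          ≤ (1 + M * (b - a)) ^ w.length * (M * t - M * s) := hbnd
        _ = (1 + M * (b - a)) ^ w.length * M * (t - s) := by ring
    constructor
    · intro t h1 h2
      have h0 : sigWord x a (i :: w) a = 0 := by
        rw [sigWord_cons]
        have : Tendsto (rsSum (fun u => sigWord x a w u) (fun u => x u i) a a) atTop (𝓝 0) := by
          have hz : ∀ n, rsSum (fun u => sigWord x a w u) (fun u => x u i) a a n = 0 := by
            intro n
            unfold rsSum
            apply Finset.sum_eq_zero
            intro j _
            have e1 : a + ((j:ℝ) + 1) * (a - a) / n = a := by rw [sub_self]; ring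
            have e2 : a + (j:ℝ) * (a - a) / n = a := by rw [sub_self]; ring
            rw [e1, e2, sub_self, mul_zero]
          have hfun : rsSum (fun u => sigWord x a w u) (fun u => x u i) a a = fun _ => 0 :=
            funext hz
          rw [hfun]
          exact tendsto_const_nhds
        rw [rsInt, this.limUnder_eq]
      have := hKey a t le_rfl h1 h2
      rw [h0, sub_zero] at this
      calc |sigWord x a (i :: w) t| ≤ (1 + M * (b - a)) ^ w.length * M * (t - a) := this
        _ ≤ (1 + M * (b - a)) ^ w.length * (1 + M * (b - a)) := by
          have hMt : M * (t - a) ≤ M * (b - a) := by nlinarith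
          have g1 := mul_le_mul_of_nonneg_left hMt hpow.le
          have g2 := mul_le_mul_of_nonneg_left
            (by linarith : M * (b - a) ≤ 1 + M * (b - a)) hpow.le
          calc (1 + M * (b - a)) ^ w.length * M * (t - a)
              = (1 + M * (b - a)) ^ w.length * (M * (t - a)) := by ring
            _ ≤ (1 + M * (b - a)) ^ w.length * (M * (b - a)) := g1
            _ ≤ _ := g2
        _ = (1 + M * (b - a)) ^ (i :: w).length := by
          rw [List.length_cons, pow_succ]
    · intro s t h1 h2 h3
      refine (hKey s t h1 h2 h3).trans ?_
      have hle : ((1 + M * (b - a)) ^ w.length) ≤ (1 + M * (b - a)) ^ (i :: w).length := by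
        apply pow_le_pow_right₀ hbase
        simp [List.length_cons]
      nlinarith [mul_nonneg (mul_nonneg (sub_nonneg.2 hle) hM) (sub_nonneg.2 h2)]

theorem unif_raw_mem {a t : ℝ} (hat : a ≤ t) {n m : ℕ} (hm : m ≤ n) (hn : 1 ≤ n) :
    a ≤ a + m * (t - a) / n ∧ a + m * (t - a) / n ≤ t := by
  have hn0 : (0:ℝ) < n := by exact_mod_cast (by omega : 0 < n)
  have hmn : (m:ℝ) ≤ n := by exact_mod_cast hm
  constructor
  · have : (0:ℝ) ≤ m * (t - a) / n :=
      div_nonneg (mul_nonneg (Nat.cast_nonneg m) (sub_nonneg.2 hat)) (Nat.cast_nonneg n)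
    linarith
  · have h1 : (m:ℝ) * (t - a) / n ≤ t - a := by
      rw [div_le_iff₀ hn0]
      nlinarith [sub_nonneg.2 hat]
    linarith

theorem rsSum_congr {F F' G G' : ℝ → ℝ} {a t : ℝ} (hat : a ≤ t)
    (h : ∀ u, a ≤ u → u ≤ t → F u = F' u ∧ G u = G' u) (n : ℕ) :
    rsSum F G a t n = rsSum F' G' a t n := by
  unfold rsSum
  rcases Nat.eq_zero_or_pos n with hn | hn
  · simp [hn]
  refine Finset.sum_congr rfl fun j hj => ?_
  simp only [Finset.mem_range] at hj
  have e1 : a + ((j:ℝ) + 1) * (t - a) / n = a + (((j + 1 : ℕ)):ℝ) * (t - a) / n := by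
    push_cast; ring
  have hp1 := unif_raw_mem hat (by omega : j ≤ n) (by omega : 1 ≤ n)
  have hp2 := unif_raw_mem hat (by omega : j + 1 ≤ n) (by omega : 1 ≤ n)
  rw [e1, (h _ hp1.1 hp1.2).1, (h _ hp1.1 hp1.2).2, (h _ hp2.1 hp2.2).2]

theorem rsInt_congr {F F' G G' : ℝ → ℝ} {a t : ℝ} (hat : a ≤ t)
    (h : ∀ u, a ≤ u → u ≤ t → F u = F' u ∧ G u = G' u) :
    rsInt F G a t = rsInt F' G' a t := by
  unfold rsInt
  congr 1
  funext n
  exact rsSum_congr hat h n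

theorem sigWord_congr {d : ℕ} {a b : ℝ} {x y : ℝ → Vec d} (hab : a ≤ b)
    (hxy : ∀ u, a ≤ u → u ≤ b → x u = y u) (w : List (Fin d)) :
    ∀ t, a ≤ t → t ≤ b → sigWord x a w t = sigWord y a w t := by
  induction w with
  | nil => intro t _ _; rfl
  | cons i w ih =>
    intro t hat htb
    rw [sigWord_cons, sigWord_cons]
    refine rsInt_congr hat fun u h1 h2 => ⟨?_, ?_⟩
    · exact ih u h1 (h2.trans htb)
    · show x u i = y u i
      rw [hxy u h1 (h2.trans htb)]

theorem sum_rpow_le_rpow_sum {f : ℕ → ℝ} (hf : ∀ i, 0 ≤ f i) {p : ℝ} (hp : 1 ≤ p) (n : ℕ) :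
    ∑ i ∈ Finset.range n, f i ^ p ≤ (∑ i ∈ Finset.range n, f i) ^ p := by
  induction n with
  | zero =>
    simp only [Finset.range_zero, Finset.sum_empty]
    rw [Real.zero_rpow (by linarith : p ≠ 0)]
  | succ n ih =>
    rw [Finset.sum_range_succ, Finset.sum_range_succ]
    have hX : 0 ≤ ∑ i ∈ Finset.range n, f i := Finset.sum_nonneg fun i _ => hf i
    have hY := hf n
    have key := NNReal.add_rpow_le_rpow_add (⟨_, hX⟩ : NNReal) (⟨_, hY⟩ : NNReal) hp
    have key2 : (∑ i ∈ Finset.range n, f i) ^ p + f n ^ p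
        ≤ ((∑ i ∈ Finset.range n, f i) + f n) ^ p := by
      have := NNReal.coe_le_coe.mpr key
      push_cast [NNReal.coe_rpow] at this
      exact this
    linarith

end SigAux
namespace SigAux

open Set Finset Filter Topology

theorem sum_norm_le_adm {d : ℕ} {M a b : ℝ} {x : ℝ → Vec d} (hM : 0 ≤ M)
    (hx : Adm d M a b x) {t : ℕ → ℝ} {n : ℕ} (ht : Monotone t) (h0 : t 0 = a) (hn : t n = b) :
    ∑ i ∈ Finset.range n, ‖x (t (i + 1)) - x (t i)‖ ≤ M * (b - a) := by
  have hmem : ∀ i, i ≤ n → a ≤ t i ∧ t i ≤ b := fun i hi =>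
    ⟨h0 ▸ ht (Nat.zero_le i), hn ▸ ht hi⟩
  calc ∑ i ∈ Finset.range n, ‖x (t (i + 1)) - x (t i)‖
      ≤ ∑ i ∈ Finset.range n, (M * t (i + 1) - M * t i) := by
        refine Finset.sum_le_sum fun i hi => ?_
        simp only [Finset.mem_range] at hi
        have := hx (t i) (t (i + 1)) (hmem i (by omega)).1 (ht (Nat.le_succ i))
          (hmem (i + 1) (by omega)).2
        calc ‖x (t (i + 1)) - x (t i)‖ ≤ M * (t (i + 1) - t i) := this
          _ = M * t (i + 1) - M * t i := by ring
    _ = M * t n - M * t 0 := Finset.sum_range_sub (fun i => M * t i) n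
    _ = M * (b - a) := by rw [h0, hn]; ring

theorem bddAbove_varSums_of_adm {d : ℕ} {M a b p : ℝ} (hab : a ≤ b) (hM : 0 ≤ M)
    (hp : 1 ≤ p) {x : ℝ → Vec d} (hx : Adm d M a b x) :
    BddAbove (varSums x p a b) := by
  refine ⟨(M * (b - a)) ^ p, ?_⟩
  rintro s ⟨n, t, ht, h0, hn, rfl⟩
  calc ∑ i ∈ Finset.range n, ‖x (t (i + 1)) - x (t i)‖ ^ p
      ≤ (∑ i ∈ Finset.range n, ‖x (t (i + 1)) - x (t i)‖) ^ p :=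
        sum_rpow_le_rpow_sum (fun i => norm_nonneg _) hp n
    _ ≤ (M * (b - a)) ^ p := by
        apply Real.rpow_le_rpow (Finset.sum_nonneg fun i _ => norm_nonneg _)
          (sum_norm_le_adm hM hx ht h0 hn) (by linarith)

/-- Reparameterisation invariance of iterated integrals, for admissible `x`. -/
theorem sigWord_reparam {d : ℕ} {M a b : ℝ} (hab : a ≤ b) (hM : 0 ≤ M)
    {x : ℝ → Vec d} (hx : Adm d M a b x)
    {ψ : ℝ → ℝ} (hψm : MonotoneOn ψ (Icc a b)) (hψc : ContinuousOn ψ (Icc a b))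
    (hψa : ψ a = a) (hψb : ψ b = b) (w : List (Fin d)) :
    ∀ t, a ≤ t → t ≤ b → sigWord (fun u => x (ψ u)) a w t = sigWord x a w (ψ t) := by
  have hψmem : ∀ u, a ≤ u → u ≤ b → a ≤ ψ u ∧ ψ u ≤ b := by
    intro u h1 h2
    constructor
    · rw [← hψa]; exact hψm ⟨le_rfl, hab⟩ ⟨h1, h2⟩ h1
    · rw [← hψb]; exact hψm ⟨h1, h2⟩ ⟨hab, le_rfl⟩ h2
  induction w with
  | nil => intro t _ _; rfl
  | cons i w ih =>
    intro t hat htb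
    rw [sigWord_cons, sigWord_cons]
    have hψt := hψmem t hat htb
    have hprops := sigWord_props hab hM hx w
    have hFcont : ContinuousOn (fun u => sigWord x a w u) (Icc a b) :=
      lip_continuousOn (mul_nonneg (pow_nonneg (by nlinarith [sub_nonneg.2 hab]) _) hM)
        hprops.2
    have hq0 : ∀ k : ℕ, 1 ≤ k → ψ (unifP a t k 0) = a := fun k _ => by
      rw [unifP_zero, hψa]
    have hqn : ∀ k : ℕ, 1 ≤ k → ψ (unifP a t k k) = ψ t := fun k hk => by
      rw [unifP_last a t hk]
    have hqmem : ∀ k j, a ≤ unifP a t k j ∧ unifP a t k j ≤ t := by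
      intro k j
      rcases Nat.eq_zero_or_pos k with hk | hk
      · subst hk
        unfold unifP
        simp only [Nat.cast_ofNat, CharP.cast_eq_zero, div_zero]
        constructor <;> simp [hat]
      · exact unifP_mem hat hk j
    have hqm : ∀ k : ℕ, 1 ≤ k → Monotone (fun j => ψ (unifP a t k j)) := by
      intro k hk j1 j2 hj
      have m1 := (hqmem k j1)
      have m2 := (hqmem k j2)
      exact hψm ⟨m1.1, m1.2.trans htb⟩ ⟨m2.1, m2.2.trans htb⟩
        (unifP_monotone hat k hj)
    have hmesh : ∀ δ, 0 < δ → ∀ᶠ k in atTop, ∀ j < k,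
        ψ (unifP a t k (j + 1)) - ψ (unifP a t k j) ≤ δ := by
      intro δ hδ
      have hucψ := isCompact_Icc.uniformContinuousOn_of_continuous hψc
      rw [Metric.uniformContinuousOn_iff] at hucψ
      obtain ⟨δ', hδ'0, hδ'⟩ := hucψ δ hδ
      obtain ⟨K, hK⟩ := exists_nat_gt ((t - a) / δ' + 1)
      filter_upwards [eventually_ge_atTop (max K 1)] with k hk
      have hk1 : 1 ≤ k := le_trans (le_max_right _ _) hk
      have hkK : (K:ℝ) ≤ k := by exact_mod_cast le_trans (le_max_left _ _) hk
      have hk0 : (0:ℝ) < k := by exact_mod_cast (by omega : 0 < k)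
      have hmesh0 : (t - a) / k < δ' := by
        have h' : (t - a) / δ' < K := by linarith
        rw [div_lt_iff₀ hδ'0] at h'
        rw [div_lt_iff₀ hk0]
        have h'' : δ' * (K:ℝ) ≤ δ' * k := mul_le_mul_of_nonneg_left hkK hδ'0.le
        nlinarith
      intro j hj
      have m1 := hqmem k j
      have m2 := hqmem k (j + 1)
      have hdist : dist (unifP a t k (j + 1)) (unifP a t k j) < δ' := by
        rw [Real.dist_eq, unifP_mesh k hj, abs_of_nonneg
          (div_nonneg (sub_nonneg.2 hat) (Nat.cast_nonneg k))]
        exact hmesh0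
      have := hδ' _ ⟨m2.1, m2.2.trans htb⟩ _ ⟨m1.1, m1.2.trans htb⟩ hdist
      rw [Real.dist_eq] at this
      exact (le_abs_self _).trans this.le
    have h1 : Tendsto (fun k => rsum (fun u => sigWord x a w u) (fun u => x u i)
        (fun j => ψ (unifP a t k j)) k) atTop
        (𝓝 (rsInt (fun u => sigWord x a w u) (fun u => x u i) a (ψ t))) := by
      refine tendsto_rsum_of_mesh (V := fun u => M * u) hψt.1
        (hFcont.mono (Icc_subset_Icc le_rfl hψt.2))
        ((hx.ctrl i).mono le_rfl hψt.2) hqm hq0 hqn hmesh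
    have h2 : ∀ᶠ k in atTop, rsum (fun u => sigWord x a w u) (fun u => x u i)
        (fun j => ψ (unifP a t k j)) k
          = rsSum (fun u => sigWord (fun v => x (ψ v)) a w u) (fun u => x (ψ u) i) a t k := by
      filter_upwards [eventually_ge_atTop 1] with k hk
      unfold rsum rsSum
      refine Finset.sum_congr rfl fun j hj => ?_
      simp only [Finset.mem_range] at hj
      have e1 : a + ((j:ℝ) + 1) * (t - a) / k = unifP a t k (j + 1) := by
        rw [unifP_eq k (by omega : j + 1 ≤ k)]
        push_cast; ring
      have e2 : a + (j:ℝ) * (t - a) / k = unifP a t k j := by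
        rw [unifP_eq k (by omega : j ≤ k)]
      have m1 := hqmem k j
      rw [e1, e2]
      beta_reduce
      rw [ih (unifP a t k j) m1.1 (m1.2.trans htb)]
    have h3 : Tendsto (rsSum (fun u => sigWord (fun v => x (ψ v)) a w u)
        (fun u => x (ψ u) i) a t) atTop
        (𝓝 (rsInt (fun u => sigWord x a w u) (fun u => x u i) a (ψ t))) :=
      h1.congr' h2
    rw [rsInt, h3.limUnder_eq]

end SigAux
namespace SigAux

open Set Finset Filter Topology

theorem exists_lipschitz_rep {d : ℕ} {a b : ℝ} (hab : a < b) {y : ℝ → Vec d}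
    (hyc : ContinuousOn y (Icc a b)) (hyb : BddAbove (varSums y 1 a b)) :
    ∃ z : ℝ → Vec d,
      Adm d ((b - a + VarI y a b) / (b - a)) a b z ∧
      z a = y a ∧
      (∀ s ∈ varSums z 1 a b, s ≤ VarI y a b) ∧
      (∀ w : List (Fin d), sigWord y a w b = sigWord z a w b) := by
  have hL0 : 0 ≤ VarI y a b := VarI_nonneg hyb hab.le
  have hden : (0:ℝ) < b - a + VarI y a b := by linarith
  have hba : (0:ℝ) < b - a := by linarith
  set L := VarI y a b with hLdef
  set c0 : ℝ := (b - a) / (b - a + L) with hc0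
  have hc0pos : 0 < c0 := by rw [hc0]; positivity
  set K : ℝ := (b - a + L) / (b - a) with hKdef
  have hKpos : 0 < K := by rw [hKdef]; positivity
  have hc0K : c0 * K = 1 := by rw [hc0, hKdef]; field_simp
  set ψ : ℝ → ℝ := fun s => a + c0 * (s - a + VarI y a s) with hψdef
  have hVmono : ∀ s t, a ≤ s → s ≤ t → t ≤ b → VarI y a s ≤ VarI y a t :=
    fun s t h1 h2 h3 => VarI_mono_right hyb h1 h2 h3
  have hψa : ψ a = a := by rw [hψdef]; simp [VarI_self]
  have hψb : ψ b = b := by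
    rw [hψdef]
    simp only
    rw [← hLdef, hc0]
    field_simp
    ring
  have hψsm : StrictMonoOn ψ (Icc a b) := by
    intro s hs t ht hst
    have h1 := hVmono s t hs.1 hst.le ht.2
    have h2 : s - a + VarI y a s < t - a + VarI y a t := by linarith
    rw [hψdef]
    simp only
    nlinarith
  have hψcont : ContinuousOn ψ (Icc a b) := by
    rw [hψdef]
    apply ContinuousOn.add continuousOn_const
    apply ContinuousOn.mul continuousOn_const
    exact ContinuousOn.add (by fun_prop) (continuousOn_VarI hyc hyb)
  have hψmono : MonotoneOn ψ (Icc a b) := hψsm.monotoneOn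
  have hψmem : ∀ s, s ∈ Icc a b → ψ s ∈ Icc a b := fun s hs =>
    ⟨hψa ▸ hψmono ⟨le_rfl, hab.le⟩ hs hs.1, hψb ▸ hψmono hs ⟨hab.le, le_rfl⟩ hs.2⟩
  have hIVT : ∀ t : ℝ, ∃ s, s ∈ Icc a b ∧ ψ s = min (max t a) b := by
    intro t
    have hmem : min (max t a) b ∈ Icc (ψ a) (ψ b) := by
      rw [hψa, hψb]
      exact ⟨le_min (le_max_right t a) hab.le, min_le_right _ _⟩
    obtain ⟨s, hs, hψs⟩ := intermediate_value_Icc hab.le hψcont hmem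
    exact ⟨s, hs, hψs⟩
  choose φ hφmem hφeq using hIVT
  have hclamp : ∀ s, s ∈ Icc a b → min (max s a) b = s := by
    intro s hs
    rw [max_eq_left hs.1, min_eq_left hs.2]
  have hφψ : ∀ s, s ∈ Icc a b → φ (ψ s) = s := by
    intro s hs
    apply hψsm.injOn (hφmem (ψ s)) hs
    rw [hφeq (ψ s), hclamp _ (hψmem s hs)]
  have hφm : Monotone φ := by
    intro s t hst
    by_contra hcon
    push_neg at hcon
    have h1 := hψsm (hφmem t) (hφmem s) hcon
    rw [hφeq s, hφeq t] at h1
    have h2 : min (max s a) b ≤ min (max t a) b :=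
      min_le_min (max_le_max hst le_rfl) le_rfl
    linarith
  have hφa : φ a = a := by
    have := hφψ a ⟨le_rfl, hab.le⟩
    rwa [hψa] at this
  have hφb : φ b = b := by
    have := hφψ b ⟨hab.le, le_rfl⟩
    rwa [hψb] at this
  have hyV : ∀ u v, a ≤ u → u ≤ v → v ≤ b → ‖y v - y u‖ ≤ VarI y a v - VarI y a u := by
    intro u v h1 h2 h3
    have hn := norm_le_VarI (bddAbove_sub hyb h1 h3) h2
    have hs := VarI_superadd (bddAbove_sub hyb le_rfl h3) h1 h2
    linarith
  have hψφeq : ∀ s, a ≤ s → s ≤ b → c0 * (φ s - a + VarI y a (φ s)) = s - a := by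
    intro s h1 h2
    have := hφeq s
    rw [hclamp s ⟨h1, h2⟩] at this
    rw [hψdef] at this
    simp only at this
    linarith
  have hVφ : ∀ s t, a ≤ s → s ≤ t → t ≤ b →
      VarI y a (φ t) - VarI y a (φ s) ≤ K * (t - s) := by
    intro s t h1 h2 h3
    have hs_eq := hψφeq s h1 (h2.trans h3)
    have ht_eq := hψφeq t (h1.trans h2) h3
    have hφst : φ s ≤ φ t := hφm h2
    have key : c0 * (VarI y a (φ t) - VarI y a (φ s)) ≤ t - s := by nlinarith
    have hint := mul_le_mul_of_nonneg_left key hKpos.le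
    nlinarith
  have hAdm : Adm d K a b (fun t => y (φ t)) := by
    intro s t h1 h2 h3
    have hφst : φ s ≤ φ t := hφm h2
    calc ‖y (φ t) - y (φ s)‖ ≤ VarI y a (φ t) - VarI y a (φ s) :=
        hyV (φ s) (φ t) (hφmem s).1 hφst (hφmem t).2
      _ ≤ K * (t - s) := hVφ s t h1 h2 h3
  refine ⟨fun t => y (φ t), hAdm, by show y (φ a) = y a; rw [hφa], ?_, ?_⟩
  · rintro s ⟨n, t, ht, h0, hn, rfl⟩
    have hmem' := mem_varSums y 1 (t := fun i => φ (t i)) (n := n)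
      (fun i j hij => hφm (ht hij)) (by show φ (t 0) = a; rw [h0, hφa])
      (by show φ (t n) = b; rw [hn, hφb])
    exact le_csSup hyb hmem'
  · intro w
    have hcong : ∀ u, a ≤ u → u ≤ b → y u = (fun t => y (φ t)) (ψ u) := by
      intro u h1 h2
      show y u = y (φ (ψ u))
      rw [hφψ u ⟨h1, h2⟩]
    have h1 : sigWord y a w b = sigWord (fun u => (fun t => y (φ t)) (ψ u)) a w b :=
      sigWord_congr hab.le hcong w b hab.le le_rfl
    have h2 : sigWord (fun u => (fun t => y (φ t)) (ψ u)) a w b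
        = sigWord (fun t => y (φ t)) a w (ψ b) :=
      sigWord_reparam hab.le hKpos.le hAdm hψmono hψcont hψa hψb w b hab.le le_rfl
    rw [h1, h2, hψb]

end SigAux
namespace SigAux

open Set Finset Filter Topology

set_option maxHeartbeats 1000000 in
theorem sigWord_tendsto {d : ℕ} {M a b : ℝ} (hab : a < b) (hM : 0 ≤ M)
    {X : ℕ → ℝ → Vec d} {x : ℝ → Vec d} (hX : ∀ k, Adm d M a b (X k)) (hx : Adm d M a b x)
    (hconv : ∀ ε, 0 < ε → ∀ᶠ k in atTop, ∀ u, a ≤ u → u ≤ b → ‖X k u - x u‖ ≤ ε)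
    (w : List (Fin d)) :
    ∀ ε, 0 < ε → ∀ᶠ k in atTop, ∀ t, a ≤ t → t ≤ b →
      |sigWord (X k) a w t - sigWord x a w t| ≤ ε := by
  induction w with
  | nil =>
    intro ε hε
    filter_upwards with k
    intro t _ _
    simp only [sigWord_nil, sub_self, abs_zero]
    linarith
  | cons i w ih =>
    intro ε hε
    have hbase : (1:ℝ) ≤ 1 + M * (b - a) := by nlinarith [sub_nonneg.2 hab.le]
    set B := (1 + M * (b - a)) ^ w.length with hB
    have hB1 : 1 ≤ B := one_le_pow₀ hbase
    have hBpos : 0 < B := by linarith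
    have hba : (0:ℝ) < b - a := by linarith
    obtain ⟨m, hm1, hmbig⟩ : ∃ m : ℕ, 1 ≤ m ∧
        (B * M * (2 * (b - a) / m)) * (M * (b - a)) ≤ ε / 4 := by
      have hC0 : 0 ≤ B * M * (2 * (b - a)) * (M * (b - a)) := by
        have := hba.le
        positivity
      obtain ⟨m0, hm0⟩ := exists_nat_gt (B * M * (2 * (b - a)) * (M * (b - a)) / (ε / 4))
      refine ⟨m0 + 1, by omega, ?_⟩
      have hm0pos : (0:ℝ) < ((m0 + 1 : ℕ) : ℝ) := by positivity
      have h1 : B * M * (2 * (b - a)) * (M * (b - a)) / (ε / 4) < ((m0 + 1 : ℕ):ℝ) := by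
        push_cast
        push_cast at hm0
        linarith
      rw [div_lt_iff₀ (by positivity : (0:ℝ) < ε / 4)] at h1
      have he : (B * M * (2 * (b - a) / ((m0 + 1 : ℕ):ℝ))) * (M * (b - a))
          = B * M * (2 * (b - a)) * (M * (b - a)) / ((m0 + 1 : ℕ):ℝ) := by
        field_simp
      rw [he, div_le_iff₀ hm0pos]
      nlinarith
    have hm0 : (0:ℝ) < (m:ℝ) := by exact_mod_cast (by omega : 0 < m)
    have hIH := ih (ε / (4 * (M * (b - a) + 1))) (by positivity)
    have hG := hconv (ε / (4 * (2 * m * B + 1))) (by positivity)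
    filter_upwards [hIH, hG] with k hk1 hk2
    intro t hat htb
    rw [sigWord_cons, sigWord_cons]
    have hp1 := sigWord_props hab.le hM (hX k) w
    have hp2 := sigWord_props hab.le hM hx w
    rw [← hB] at hp1 hp2
    have hBM : 0 ≤ B * M := mul_nonneg hBpos.le hM
    have hF1c : ContinuousOn (fun u => sigWord (X k) a w u) (Icc a b) :=
      lip_continuousOn (mul_nonneg hBpos.le hM) hp1.2
    have hF2c : ContinuousOn (fun u => sigWord x a w u) (Icc a b) :=
      lip_continuousOn (mul_nonneg hBpos.le hM) hp2.2
    have habs1 : ∀ (F : ℝ → ℝ), (∀ s t', a ≤ s → s ≤ t' → t' ≤ b →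
        |F t' - F s| ≤ B * M * (t' - s)) →
        ∀ s u, a ≤ s → s ≤ b → a ≤ u → u ≤ b → |F s - F u| ≤ B * M * |s - u| := by
      intro F hF s u h1 h2 h3 h4
      rcases le_total u s with hc | hc
      · have h5 := hF u s h3 hc h2
        have h7 : s - u ≤ |s - u| := le_abs_self _
        calc |F s - F u| ≤ B * M * (s - u) := h5
          _ ≤ B * M * |s - u| := mul_le_mul_of_nonneg_left h7 hBM
      · have h5 := hF s u h1 hc h4
        have h7 : u - s ≤ |s - u| := by rw [abs_sub_comm]; exact le_abs_self _
        calc |F s - F u| = |F u - F s| := by rw [abs_sub_comm]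
          _ ≤ B * M * (u - s) := h5
          _ ≤ B * M * |s - u| := mul_le_mul_of_nonneg_left h7 hBM
    have hmodest : ∀ (F : ℝ → ℝ), (∀ s u, a ≤ s → s ≤ b → a ≤ u → u ≤ b →
        |F s - F u| ≤ B * M * |s - u|) →
        ∀ s u, a ≤ s → s ≤ t → a ≤ u → u ≤ t →
          |s - u| ≤ (t - a) / m + (b - a) / m → |F s - F u| ≤ B * M * (2 * (b - a) / m) := by
      intro F hF s u h1 h2 h3 h4 h5
      have h6 := hF s u h1 (h2.trans htb) h3 (h4.trans htb)
      have h7 : (t - a) / m + (b - a) / m ≤ 2 * (b - a) / m := by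
        have : t - a ≤ b - a := by linarith
        rw [← add_div, div_le_div_iff₀ hm0 hm0]
        nlinarith
      calc |F s - F u| ≤ B * M * |s - u| := h6
        _ ≤ B * M * (2 * (b - a) / m) :=
          mul_le_mul_of_nonneg_left (h5.trans h7) hBM
    have hend : ∀ (F G : ℝ → ℝ), ContinuousOn F (Icc a b) → Ctrl G (fun u => M * u) a b →
        (∀ s u, a ≤ s → s ≤ b → a ≤ u → u ≤ b → |F s - F u| ≤ B * M * |s - u|) →
        |rsum F G (unifP a t m) m - rsInt F G a t| ≤ ε / 4 := by
      intro F G hFc hGc hFl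
      have hest := rsum_sub_rsInt_le (V := fun u => M * u) hat
        (hFc.mono (Icc_subset_Icc le_rfl htb)) (hGc.mono le_rfl htb)
        (unifP_monotone hat m) (unifP_zero a t m) (unifP_last a t hm1)
        (mul_nonneg hBM (by positivity) : (0:ℝ) ≤ B * M * (2 * (b - a) / m))
        (fun j hj => le_of_eq (unifP_mesh m hj))
        ⟨(b - a) / m, by positivity, fun s u h1 h2 h3 h4 h5 =>
          hmodest F hFl s u h1 h2 h3 h4 h5⟩
      refine hest.trans ?_
      have h8 : M * t - M * a ≤ M * (b - a) := by nlinarith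
      have h9 : 0 ≤ M * t - M * a := by nlinarith [sub_nonneg.2 hat]
      calc B * M * (2 * (b - a) / m) * (M * t - M * a)
          ≤ B * M * (2 * (b - a) / m) * (M * (b - a)) := by
            apply mul_le_mul_of_nonneg_left h8
            exact mul_nonneg hBM (by positivity)
        _ ≤ ε / 4 := hmbig
    have hcoordX : ∀ u v, a ≤ u → u ≤ v → v ≤ b → |X k v i - X k u i| ≤ M * (v - u) := by
      intro u v h1 h2 h3
      have hc := coord_abs_le_norm (X k v - X k u) i
      have := hX k u v h1 h2 h3
      simp only [PiLp.sub_apply] at hc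
      linarith
    have hcoorddiff : ∀ u, a ≤ u → u ≤ b →
        |X k u i - x u i| ≤ ε / (4 * (2 * m * B + 1)) := by
      intro u h1 h2
      have hc := coord_abs_le_norm (X k u - x u) i
      simp only [PiLp.sub_apply] at hc
      exact hc.trans (hk2 u h1 h2)
    have hmid : |rsum (fun u => sigWord (X k) a w u) (fun u => X k u i) (unifP a t m) m
        - rsum (fun u => sigWord x a w u) (fun u => x u i) (unifP a t m) m|
          ≤ ε / 4 + ε / 4 := by
      have hqmem : ∀ j, a ≤ unifP a t m j ∧ unifP a t m j ≤ t := fun j => unifP_mem hat hm1 j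
      have e : rsum (fun u => sigWord (X k) a w u) (fun u => X k u i) (unifP a t m) m
          - rsum (fun u => sigWord x a w u) (fun u => x u i) (unifP a t m) m
          = ∑ j ∈ Finset.range m,
            ((sigWord (X k) a w (unifP a t m j) - sigWord x a w (unifP a t m j))
                * (X k (unifP a t m (j+1)) i - X k (unifP a t m j) i)
              + sigWord x a w (unifP a t m j)
                * ((X k (unifP a t m (j+1)) i - X k (unifP a t m j) i)
                  - (x (unifP a t m (j+1)) i - x (unifP a t m j) i))) := by
        unfold rsum
        rw [← Finset.sum_sub_distrib]
        refine Finset.sum_congr rfl fun j _ => ?_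
        ring
      rw [e]
      have hbnd : ∀ j ∈ Finset.range m,
          |(sigWord (X k) a w (unifP a t m j) - sigWord x a w (unifP a t m j))
                * (X k (unifP a t m (j+1)) i - X k (unifP a t m j) i)
              + sigWord x a w (unifP a t m j)
                * ((X k (unifP a t m (j+1)) i - X k (unifP a t m j) i)
                  - (x (unifP a t m (j+1)) i - x (unifP a t m j) i))|
            ≤ ε / (4 * (M * (b - a) + 1)) * (M * ((t - a) / m))
              + B * (2 * (ε / (4 * (2 * m * B + 1)))) := by
        intro j hj
        simp only [Finset.mem_range] at hj
        have hq1 := hqmem j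
        have hq2 := hqmem (j + 1)
        have hFd : |sigWord (X k) a w (unifP a t m j) - sigWord x a w (unifP a t m j)|
            ≤ ε / (4 * (M * (b - a) + 1)) := hk1 _ hq1.1 (hq1.2.trans htb)
        have hGd : |X k (unifP a t m (j+1)) i - X k (unifP a t m j) i| ≤ M * ((t - a) / m) := by
          have := hcoordX (unifP a t m j) (unifP a t m (j+1)) hq1.1
            (unifP_monotone hat m (Nat.le_succ j)) (hq2.2.trans htb)
          rw [unifP_mesh m hj] at this
          exact this
        have hF2b : |sigWord x a w (unifP a t m j)| ≤ B := hp2.1 _ hq1.1 (hq1.2.trans htb)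
        have hGG : |(X k (unifP a t m (j+1)) i - X k (unifP a t m j) i)
            - (x (unifP a t m (j+1)) i - x (unifP a t m j) i)|
              ≤ 2 * (ε / (4 * (2 * m * B + 1))) := by
          have h1 := hcoorddiff (unifP a t m (j+1)) hq2.1 (hq2.2.trans htb)
          have h2 := hcoorddiff (unifP a t m j) hq1.1 (hq1.2.trans htb)
          have e2 : (X k (unifP a t m (j+1)) i - X k (unifP a t m j) i)
              - (x (unifP a t m (j+1)) i - x (unifP a t m j) i)
              = (X k (unifP a t m (j+1)) i - x (unifP a t m (j+1)) i)
                - (X k (unifP a t m j) i - x (unifP a t m j) i) := by ring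
          rw [e2]
          calc |_ - _| ≤ |X k (unifP a t m (j+1)) i - x (unifP a t m (j+1)) i|
              + |X k (unifP a t m j) i - x (unifP a t m j) i| := abs_sub _ _
            _ ≤ 2 * (ε / (4 * (2 * m * B + 1))) := by linarith
        calc |_| ≤ |(sigWord (X k) a w (unifP a t m j) - sigWord x a w (unifP a t m j))
                * (X k (unifP a t m (j+1)) i - X k (unifP a t m j) i)|
              + |sigWord x a w (unifP a t m j)
                * ((X k (unifP a t m (j+1)) i - X k (unifP a t m j) i)
                  - (x (unifP a t m (j+1)) i - x (unifP a t m j) i))| := abs_add_le _ _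
          _ ≤ ε / (4 * (M * (b - a) + 1)) * (M * ((t - a) / m))
              + B * (2 * (ε / (4 * (2 * m * B + 1)))) := by
            rw [abs_mul, abs_mul]
            have t1 : 0 ≤ M * ((t - a) / m) := by
              have := sub_nonneg.2 hat
              positivity
            refine add_le_add (mul_le_mul hFd hGd (abs_nonneg _) (by positivity)) ?_
            exact mul_le_mul hF2b hGG (abs_nonneg _) hBpos.le
      refine le_trans (Finset.abs_sum_le_sum_abs _ _) ?_
      refine le_trans (Finset.sum_le_sum hbnd) ?_
      rw [Finset.sum_const, Finset.card_range, nsmul_eq_mul]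
      have hsplit : (m:ℝ) * (ε / (4 * (M * (b - a) + 1)) * (M * ((t - a) / m))
          + B * (2 * (ε / (4 * (2 * m * B + 1)))))
          = ε / (4 * (M * (b - a) + 1)) * (M * (t - a))
            + (2 * m * B) * (ε / (4 * (2 * m * B + 1))) := by
        field_simp
      rw [hsplit]
      have hg1 : ε / (4 * (M * (b - a) + 1)) * (M * (t - a)) ≤ ε / 4 := by
        have h1 : M * (t - a) ≤ M * (b - a) + 1 := by nlinarith [sub_nonneg.2 hat]
        have h2 : 0 ≤ M * (t - a) := by nlinarith [sub_nonneg.2 hat]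
        have h3 : ε / (4 * (M * (b - a) + 1)) * (4 * (M * (b - a) + 1)) = ε := by
          field_simp
        have h4 : 0 < M * (b - a) + 1 := by nlinarith [sub_nonneg.2 hab.le]
        nlinarith [mul_le_mul_of_nonneg_left h1
          (by positivity : (0:ℝ) ≤ ε / (4 * (M * (b - a) + 1)))]
      have hg2 : (2 * (m:ℝ) * B) * (ε / (4 * (2 * m * B + 1))) ≤ ε / 4 := by
        have h1 : (2 * (m:ℝ) * B) ≤ 2 * m * B + 1 := by linarith
        have h4 : (0:ℝ) < 2 * m * B + 1 := by positivity
        have h3 : ε / (4 * (2 * (m:ℝ) * B + 1)) * (4 * (2 * m * B + 1)) = ε := by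
          field_simp
        nlinarith [mul_le_mul_of_nonneg_right h1
          (by positivity : (0:ℝ) ≤ ε / (4 * (2 * (m:ℝ) * B + 1)))]
      linarith
    have h1 := hend (fun u => sigWord (X k) a w u) (fun u => X k u i) hF1c
      ((hX k).ctrl i) (habs1 _ hp1.2)
    have h2 := hend (fun u => sigWord x a w u) (fun u => x u i) hF2c
      (hx.ctrl i) (habs1 _ hp2.2)
    calc |rsInt (fun u => sigWord (X k) a w u) (fun u => X k u i) a t
        - rsInt (fun u => sigWord x a w u) (fun u => x u i) a t|
        ≤ |rsum (fun u => sigWord (X k) a w u) (fun u => X k u i) (unifP a t m) m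
            - rsInt (fun u => sigWord (X k) a w u) (fun u => X k u i) a t|
          + |rsum (fun u => sigWord (X k) a w u) (fun u => X k u i) (unifP a t m) m
            - rsum (fun u => sigWord x a w u) (fun u => x u i) (unifP a t m) m|
          + |rsum (fun u => sigWord x a w u) (fun u => x u i) (unifP a t m) m
            - rsInt (fun u => sigWord x a w u) (fun u => x u i) a t| := by
          have := abs_sub_le
            (rsInt (fun u => sigWord (X k) a w u) (fun u => X k u i) a t)
            (rsum (fun u => sigWord (X k) a w u) (fun u => X k u i) (unifP a t m) m)
            (rsInt (fun u => sigWord x a w u) (fun u => x u i) a t)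
          have h5 := abs_sub_le
            (rsum (fun u => sigWord (X k) a w u) (fun u => X k u i) (unifP a t m) m)
            (rsum (fun u => sigWord x a w u) (fun u => x u i) (unifP a t m) m)
            (rsInt (fun u => sigWord x a w u) (fun u => x u i) a t)
          rw [abs_sub_comm (rsInt (fun u => sigWord (X k) a w u) (fun u => X k u i) a t)
            (rsum (fun u => sigWord (X k) a w u) (fun u => X k u i) (unifP a t m) m)] at this
          linarith
      _ ≤ ε / 4 + (ε / 4 + ε / 4) + ε / 4 := by
          refine add_le_add (add_le_add h1 hmid) h2
      _ = ε := by ring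

end SigAux
namespace SigAux

open Set Finset Filter Topology

theorem rsInt_self (F G : ℝ → ℝ) (a : ℝ) : rsInt F G a a = 0 := by
  have hz : ∀ n, rsSum F G a a n = 0 := by
    intro n
    unfold rsSum
    apply Finset.sum_eq_zero
    intro j _
    have e1 : a + ((j:ℝ) + 1) * (a - a) / n = a := by rw [sub_self]; ring
    have e2 : a + (j:ℝ) * (a - a) / n = a := by rw [sub_self]; ring
    rw [e1, e2, sub_self, mul_zero]
  have hfun : rsSum F G a a = fun _ => 0 := funext hz
  have : Tendsto (rsSum F G a a) atTop (𝓝 0) := by rw [hfun]; exact tendsto_const_nhds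
  rw [rsInt, this.limUnder_eq]

theorem signatureT_deg {d : ℕ} (x y : ℝ → Vec d) (a : ℝ) :
    signatureT x a a = signatureT y a a := by
  funext k
  ext idx
  show sigWord x a (List.ofFn idx).reverse a = sigWord y a (List.ofFn idx).reverse a
  cases hw : (List.ofFn idx).reverse with
  | nil => rfl
  | cons i w =>
    rw [sigWord_cons, sigWord_cons, rsInt_self, rsInt_self]

theorem sigQ_injective (d : ℕ) (p a b : ℝ) : Function.Injective (sigQ d p a b) := by
  intro q q'
  refine Quotient.inductionOn₂ q q' ?_
  intro x y h
  exact Quotient.sound h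

/-- Extension of a continuous map on `[a,b]` to `ℝ` by clamping. -/
def extI {d : ℕ} (a b : ℝ) (hab : a ≤ b) (f : C(Icc a b, Vec d)) : ℝ → Vec d :=
  fun t => f (projIcc a b hab t)

theorem extI_of_mem {d : ℕ} {a b : ℝ} (hab : a ≤ b) (f : C(Icc a b, Vec d)) {u : ℝ}
    (hu : u ∈ Icc a b) : extI a b hab f u = f ⟨u, hu⟩ := by
  unfold extI
  congr 1
  exact projIcc_of_mem hab hu

/-- The compact family: Lipschitz maps started at 0 with variation at most `r'`. -/
def Xset (d : ℕ) (a b r' : ℝ) (hab : a ≤ b) (K : NNReal) : Set C(Icc a b, Vec d) :=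
  {f | LipschitzWith K f ∧ f ⟨a, left_mem_Icc.2 hab⟩ = 0 ∧
       ∀ s ∈ varSums (extI a b hab f) 1 a b, s ≤ r'}

theorem isCompact_Xset (d : ℕ) {a b : ℝ} (r' : ℝ) (hab : a ≤ b) (K : NNReal) :
    IsCompact (Xset d a b r' hab K) := by
  apply ArzelaAscoli.isCompact_of_equicontinuous
  · have himg : ContinuousMap.toFun '' (Xset d a b r' hab K) =
        {g : Icc a b → Vec d | (∀ s t : Icc a b, dist (g s) (g t) ≤ K * dist s t) ∧
          g ⟨a, left_mem_Icc.2 hab⟩ = 0 ∧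
          ∀ s ∈ varSums (fun u => g (projIcc a b hab u)) 1 a b, s ≤ r'} := by
      ext g
      constructor
      · rintro ⟨f, ⟨h1, h2, h3⟩, rfl⟩
        exact ⟨fun s t => h1.dist_le_mul s t, h2, h3⟩
      · rintro ⟨h1, h2, h3⟩
        have hlip : LipschitzWith K g := LipschitzWith.of_dist_le_mul h1
        exact ⟨⟨g, hlip.continuous⟩, ⟨hlip, h2, h3⟩, rfl⟩
    rw [himg]
    have hclosed : IsClosed {g : Icc a b → Vec d |
        (∀ s t : Icc a b, dist (g s) (g t) ≤ K * dist s t) ∧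
          g ⟨a, left_mem_Icc.2 hab⟩ = 0 ∧
          ∀ s ∈ varSums (fun u => g (projIcc a b hab u)) 1 a b, s ≤ r'} := by
      apply IsClosed.inter
      · show IsClosed {g : Icc a b → Vec d | ∀ s t : Icc a b, dist (g s) (g t) ≤ K * dist s t}
        rw [setOf_forall]
        apply isClosed_iInter
        intro s
        rw [setOf_forall]
        apply isClosed_iInter
        intro t
        apply isClosed_le
        · exact (continuous_apply s).dist (continuous_apply t)
        · exact continuous_const
      apply IsClosed.inter
      · exact isClosed_eq (continuous_apply _) continuous_const
      · show IsClosed {g : Icc a b → Vec d |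
            ∀ s ∈ varSums (fun u => g (projIcc a b hab u)) 1 a b, s ≤ r'}
        have hset : {g : Icc a b → Vec d |
            ∀ s ∈ varSums (fun u => g (projIcc a b hab u)) 1 a b, s ≤ r'}
            = ⋂ (n : ℕ) (t : ℕ → ℝ) (_ : Monotone t) (_ : t 0 = a) (_ : t n = b),
              {g : Icc a b → Vec d |
                (∑ i ∈ Finset.range n, ‖g (projIcc a b hab (t (i + 1)))
                  - g (projIcc a b hab (t i))‖ ^ (1:ℝ)) ≤ r'} := by
          ext g
          simp only [mem_setOf_eq, mem_iInter]
          constructor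
          · intro h n t h1 h2 h3
            exact h _ ⟨n, t, h1, h2, h3, rfl⟩
          · rintro h s ⟨n, t, h1, h2, h3, rfl⟩
            exact h n t h1 h2 h3
        rw [hset]
        apply isClosed_iInter; intro n
        apply isClosed_iInter; intro t
        apply isClosed_iInter; intro _
        apply isClosed_iInter; intro _
        apply isClosed_iInter; intro _
        apply isClosed_le _ continuous_const
        apply continuous_finset_sum
        intro i _
        apply Continuous.rpow_const
        · exact ((continuous_apply (projIcc a b hab (t (i + 1)))).sub
            (continuous_apply (projIcc a b hab (t i)))).norm
        · exact fun _ => Or.inr zero_le_one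
    have hsubset : {g : Icc a b → Vec d |
        (∀ s t : Icc a b, dist (g s) (g t) ≤ K * dist s t) ∧
          g ⟨a, left_mem_Icc.2 hab⟩ = 0 ∧
          ∀ s ∈ varSums (fun u => g (projIcc a b hab u)) 1 a b, s ≤ r'}
        ⊆ Set.pi univ (fun _ : Icc a b => Metric.closedBall (0 : Vec d) (K * (b - a))) := by
      rintro g ⟨h1, h2, _⟩ t _
      simp only [Metric.mem_closedBall]
      calc dist (g t) 0 = dist (g t) (g ⟨a, left_mem_Icc.2 hab⟩) := by rw [h2]
        _ ≤ K * dist t ⟨a, left_mem_Icc.2 hab⟩ := h1 _ _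
        _ ≤ K * (b - a) := by
          apply mul_le_mul_of_nonneg_left _ (NNReal.coe_nonneg K)
          rw [Subtype.dist_eq, Real.dist_eq, abs_of_nonneg (by linarith [t.2.1] : (0:ℝ) ≤ t.1 - a)]
          linarith [t.2.2]
    exact IsCompact.of_isClosed_subset
      (isCompact_univ_pi fun _ => isCompact_closedBall _ _) hclosed hsubset
  · apply Metric.equicontinuous_of_continuity_modulus (fun δ => K * δ)
    · have h0 : Tendsto (fun δ : ℝ => (K:ℝ) * δ) (𝓝 0) (𝓝 ((K:ℝ) * 0)) :=
        (continuous_const.mul continuous_id).tendsto 0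
      simpa using h0
    · intro x y f
      exact f.2.1.dist_le_mul x y

end SigAux
namespace SigAux

open Set Finset Filter Topology

variable {d : ℕ}

theorem adm_extI {a b : ℝ} (hab : a ≤ b) {K : NNReal} {f : C(Icc a b, Vec d)}
    (hf : LipschitzWith K f) : Adm d (K : ℝ) a b (extI a b hab f) := by
  intro s t h1 h2 h3
  have hp := (LipschitzWith.projIcc hab).dist_le_mul t s
  rw [NNReal.coe_one, one_mul] at hp
  have hd : dist (extI a b hab f t) (extI a b hab f s) ≤ K * dist t s := by
    calc dist (extI a b hab f t) (extI a b hab f s)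
        ≤ K * dist (projIcc a b hab t) (projIcc a b hab s) := hf.dist_le_mul _ _
      _ ≤ K * dist t s := mul_le_mul_of_nonneg_left hp (NNReal.coe_nonneg K)
  rw [dist_eq_norm, Real.dist_eq, abs_of_nonneg (by linarith : (0:ℝ) ≤ t - s)] at hd
  exact hd

theorem memCp_extI {a b p : ℝ} (hab : a ≤ b) (hp : 1 ≤ p) {r' : ℝ} {K : NNReal}
    {f : C(Icc a b, Vec d)} (hf : f ∈ Xset d a b r' hab K) :
    MemCp (extI a b hab f) p a b ∧ extI a b hab f a = 0 := by
  obtain ⟨hlip, h0, hvar⟩ := hf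
  refine ⟨⟨?_, ?_⟩, ?_⟩
  · exact ((map_continuous f).comp (continuous_projIcc)).continuousOn
  · refine ⟨r' ^ p, ?_⟩
    rintro s ⟨n, t, ht, ht0, htn, rfl⟩
    have h1 : ∑ i ∈ Finset.range n,
        ‖extI a b hab f (t (i + 1)) - extI a b hab f (t i)‖ ≤ r' := by
      have hmem := mem_varSums (extI a b hab f) 1 ht ht0 htn
      have := hvar _ hmem
      simpa [Real.rpow_one] using this
    calc ∑ i ∈ Finset.range n, ‖extI a b hab f (t (i + 1)) - extI a b hab f (t i)‖ ^ p
        ≤ (∑ i ∈ Finset.range n, ‖extI a b hab f (t (i + 1)) - extI a b hab f (t i)‖) ^ p :=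
          sum_rpow_le_rpow_sum (fun i => norm_nonneg _) hp n
      _ ≤ r' ^ p := Real.rpow_le_rpow
          (Finset.sum_nonneg fun i _ => norm_nonneg _) h1 (by linarith)
  · rw [extI_of_mem hab f (left_mem_Icc.2 hab)]
    exact h0

set_option maxHeartbeats 1000000 in
theorem ballB_isCompact (d : ℕ) (p a b r : ℝ) (hp1 : 1 ≤ p) (hab : a ≤ b) (hr : 0 < r) :
    @IsCompact (UPath d p a b) (prodTop d p a b) (ballB d p a b r) := by
  letI := prodTop d p a b
  have hemb : IsEmbedding (sigQ d p a b) := ⟨⟨rfl⟩, sigQ_injective d p a b⟩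
  haveI : T2Space (UPath d p a b) := hemb.t2Space
  rcases eq_or_lt_of_le hab with heq | hlt
  · subst heq
    have hsub : Set.Subsingleton (ballB d p a a r) := by
      intro q _ q' _
      induction q using Quotient.inductionOn with
      | _ x =>
      induction q' using Quotient.inductionOn with
      | _ y =>
      exact Quotient.sound (signatureT_deg x.1 y.1 a)
    exact hsub.isCompact
  have hba : (0:ℝ) < b - a := by linarith
  set r' : ℕ → ℝ := fun m => r + 1 / (m + 1) with hr'
  have hr'pos : ∀ m : ℕ, 0 < r' m := fun m => by
    have h1 : (0:ℝ) < 1 / ((m:ℝ) + 1) := by positivity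
    have : r' m = r + 1 / ((m:ℝ) + 1) := rfl
    rw [this]; linarith
  have hrr' : ∀ m : ℕ, r < r' m := fun m => by
    have h1 : (0:ℝ) < 1 / ((m:ℝ) + 1) := by positivity
    have h2 : r' m = r + 1 / ((m:ℝ) + 1) := rfl
    rw [h2]; linarith
  set Kr : ℕ → ℝ := fun m => (b - a + r' m) / (b - a) with hKr
  have hKrpos : ∀ m, 0 < Kr m := fun m => by
    have h1 := hr'pos m
    have h2 : Kr m = (b - a + r' m) / (b - a) := rfl
    rw [h2]; positivity
  set K : ℕ → NNReal := fun m => Real.toNNReal (Kr m) with hK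
  have hKval : ∀ m, ((K m : ℝ)) = Kr m := fun m => Real.coe_toNNReal _ (hKrpos m).le
  set Xm : ℕ → Set C(Icc a b, Vec d) := fun m => Xset d a b (r' m) hab (K m) with hXm
  have hmem : ∀ m (f : ↥(Xm m)), MemCp (extI a b hab f.1) p a b ∧ extI a b hab f.1 a = 0 :=
    fun m f => memCp_extI hab hp1 f.2
  set Φ : (m : ℕ) → ↥(Xm m) → UPath d p a b := fun m f =>
    Quotient.mk (sigSetoid d p a b) ⟨extI a b hab f.1, hmem m f⟩ with hΦ
  have hadm : ∀ m (f : ↥(Xm m)), Adm d (Kr m) a b (extI a b hab f.1) := by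
    intro m f
    have := adm_extI hab f.2.1
    rwa [hKval] at this
  have hΦcont : ∀ m, Continuous (Φ m) := by
    intro m
    rw [hemb.toIsInducing.continuous_iff]
    have hcomp : sigQ d p a b ∘ Φ m = fun f => signatureT (extI a b hab f.1) a b := rfl
    rw [hcomp]
    apply continuous_pi
    intro k
    show Continuous fun f : ↥(Xm m) => sigLevel (extI a b hab f.1) a b k
    have hcoords : ∀ idx : Fin k → Fin d,
        Continuous fun f : ↥(Xm m) =>
          sigWord (extI a b hab f.1) a (List.ofFn idx).reverse b := by
      intro idx
      apply SeqContinuous.continuous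
      intro F f hFf
      have hconv : ∀ ε, 0 < ε → ∀ᶠ n in atTop, ∀ u, a ≤ u → u ≤ b →
          ‖extI a b hab (F n).1 u - extI a b hab f.1 u‖ ≤ ε := by
        intro ε hε
        have hFv : Tendsto (fun n => (F n).1) atTop (𝓝 f.1) :=
          (continuous_subtype_val.tendsto f).comp hFf
        rw [Metric.tendsto_atTop] at hFv
        obtain ⟨N, hN⟩ := hFv ε hε
        rw [eventually_atTop]
        refine ⟨N, fun n hn u h1 h2 => ?_⟩
        have hd := ContinuousMap.dist_apply_le_dist (f := (F n).1) (g := f.1)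
          (projIcc a b hab u)
        rw [← dist_eq_norm]
        exact hd.trans (hN n hn).le
      have hmain := sigWord_tendsto hlt (hKrpos m).le (fun n => hadm m (F n)) (hadm m f)
        hconv (List.ofFn idx).reverse
      rw [Metric.tendsto_atTop]
      intro ε hε
      obtain ⟨N, hN⟩ := eventually_atTop.1 (hmain (ε / 2) (by linarith))
      refine ⟨N, fun n hn => ?_⟩
      rw [Real.dist_eq]
      have := hN n hn b hab le_rfl
      show |sigWord (extI a b hab ((F n) : ↥(Xm m)).1) a (List.ofFn idx).reverse b
        - sigWord (extI a b hab f.1) a (List.ofFn idx).reverse b| < ε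
      linarith
    exact (PiLp.continuous_toLp 2 _).comp (continuous_pi hcoords)
  have hXmcompact : ∀ m, IsCompact (Xm m) := fun m => isCompact_Xset d (r' m) hab (K m)
  have hCm : ∀ m, IsCompact (Set.range (Φ m)) := by
    intro m
    haveI := isCompact_iff_compactSpace.mp (hXmcompact m)
    exact isCompact_range (hΦcont m)
  have hball : ballB d p a b r = ⋂ m, Set.range (Φ m) := by
    apply Set.Subset.antisymm
    · intro q hq
      obtain ⟨⟨x₀, hx₀q, hx₀BV⟩, htL⟩ := hq
      rw [Set.mem_iInter]
      intro m
      have hSne : {L | ∃ x : PathsFrom0 d p a b,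
          Quotient.mk (sigSetoid d p a b) x = q ∧ MemCp x.1 1 a b ∧
            L = pvar x.1 1 a b}.Nonempty :=
        ⟨pvar x₀.1 1 a b, x₀, hx₀q, hx₀BV, rfl⟩
      have hSbdd : BddBelow {L | ∃ x : PathsFrom0 d p a b,
          Quotient.mk (sigSetoid d p a b) x = q ∧ MemCp x.1 1 a b ∧
            L = pvar x.1 1 a b} := by
        refine ⟨0, ?_⟩
        rintro L ⟨x, _, hBV, hL⟩
        rw [hL, pvar_one_eq]
        exact VarI_nonneg hBV.2 hab
      have hlt' : treeLength d p a b q < r' m := lt_of_le_of_lt htL (hrr' m)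
      rw [treeLength] at hlt'
      obtain ⟨L, ⟨y, hyq, hyBV, hLy⟩, hLlt⟩ := (csInf_lt_iff hSbdd hSne).1 hlt'
      obtain ⟨z, hzAdm, hz0, hzsum, hzsig⟩ := exists_lipschitz_rep hlt hyBV.1 hyBV.2
      have hVarIy : VarI y.1 a b < r' m := by
        rw [← pvar_one_eq, ← hLy]
        exact hLlt
      have hzAdm' : Adm d (Kr m) a b z := by
        intro s t h1 h2 h3
        refine le_trans (hzAdm s t h1 h2 h3) ?_
        have hc : (b - a + VarI y.1 a b) / (b - a) ≤ Kr m := by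
          have hKreq : Kr m = (b - a + r' m) / (b - a) := rfl
          rw [hKreq]
          gcongr

        exact mul_le_mul_of_nonneg_right hc (by linarith)
      have hzc : ContinuousOn z (Icc a b) := Adm.continuousOn (hKrpos m).le hzAdm'
      set fz : C(Icc a b, Vec d) :=
        ⟨Set.restrict (Icc a b) z, continuousOn_iff_continuous_restrict.1 hzc⟩ with hfz
      have hproj : ∀ u, a ≤ u → u ≤ b → extI a b hab fz u = z u := by
        intro u h1 h2
        rw [extI_of_mem hab fz ⟨h1, h2⟩]
        rfl
      have hfzmem : fz ∈ Xm m := by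
        refine ⟨?_, ?_, ?_⟩
        · apply LipschitzWith.of_dist_le_mul
          intro s t
          rw [hKval m, Subtype.dist_eq, Real.dist_eq]
          have heq1 : dist (fz s) (fz t) = ‖z s.1 - z t.1‖ := dist_eq_norm _ _
          rw [heq1]
          rcases le_total (s:ℝ) (t:ℝ) with hc | hc
          · have h5 := hzAdm' s t s.2.1 hc t.2.2
            rw [abs_sub_comm, abs_of_nonneg (by linarith : (0:ℝ) ≤ t.1 - s.1)]
            rw [norm_sub_rev]
            exact h5
          · have h5 := hzAdm' t s t.2.1 hc s.2.2
            rw [abs_of_nonneg (by linarith : (0:ℝ) ≤ s.1 - t.1)]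
            exact h5
        · show z a = 0
          rw [hz0]
          exact y.2.2
        · rintro s ⟨n, t, ht, h0, hn, rfl⟩
          have hsum_eq : ∀ i ∈ Finset.range n,
              ‖extI a b hab fz (t (i + 1)) - extI a b hab fz (t i)‖ ^ (1:ℝ)
                = ‖z (t (i + 1)) - z (t i)‖ ^ (1:ℝ) := by
            intro i hi
            simp only [Finset.mem_range] at hi
            have hm1 : a ≤ t i ∧ t i ≤ b := ⟨h0 ▸ ht (Nat.zero_le i), hn ▸ ht (by omega)⟩
            have hm2 : a ≤ t (i + 1) ∧ t (i + 1) ≤ b :=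
              ⟨h0 ▸ ht (Nat.zero_le (i + 1)), hn ▸ ht (by omega)⟩
            rw [hproj _ hm1.1 hm1.2, hproj _ hm2.1 hm2.2]
          rw [Finset.sum_congr rfl hsum_eq]
          have hmemz := mem_varSums z 1 ht h0 hn
          exact (hzsum _ hmemz).trans (le_of_lt hVarIy)
      refine ⟨⟨fz, hfzmem⟩, ?_⟩
      show Quotient.mk (sigSetoid d p a b) ⟨extI a b hab fz, hmem m ⟨fz, hfzmem⟩⟩ = q
      rw [← hyq]
      apply Quotient.sound
      show signatureT (extI a b hab fz) a b = signatureT y.1 a b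
      funext k
      ext idx
      show sigWord (extI a b hab fz) a (List.ofFn idx).reverse b
        = sigWord y.1 a (List.ofFn idx).reverse b
      rw [sigWord_congr hab (fun u h1 h2 => hproj u h1 h2) (List.ofFn idx).reverse b hab
        le_rfl]
      exact (hzsig (List.ofFn idx).reverse).symm
    · intro q hq
      rw [Set.mem_iInter] at hq
      have hreps : ∀ m, ∃ x : PathsFrom0 d p a b,
          Quotient.mk (sigSetoid d p a b) x = q ∧ MemCp x.1 1 a b ∧
            pvar x.1 1 a b ≤ r' m := by
        intro m
        obtain ⟨f, hf⟩ := hq m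
        refine ⟨⟨extI a b hab f.1, hmem m f⟩, hf, ⟨(hmem m f).1.1, ⟨r' m, ?_⟩⟩, ?_⟩
        · rintro s hs
          exact f.2.2.2 s hs
        · rw [pvar_one_eq]
          exact csSup_le (varSums_nonempty _ 1 hab) f.2.2.2
      constructor
      · obtain ⟨x, hx1, hx2, _⟩ := hreps 0
        exact ⟨x, hx1, hx2⟩
      · have hle : ∀ m, treeLength d p a b q ≤ r' m := by
          intro m
          obtain ⟨x, hx1, hx2, hx3⟩ := hreps m
          have hbb : BddBelow {L | ∃ x : PathsFrom0 d p a b,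
              Quotient.mk (sigSetoid d p a b) x = q ∧ MemCp x.1 1 a b ∧
                L = pvar x.1 1 a b} := by
            refine ⟨0, ?_⟩
            rintro L ⟨x', _, hBV, hL⟩
            rw [hL, pvar_one_eq]
            exact VarI_nonneg hBV.2 hab
          exact le_trans (csInf_le hbb ⟨x, hx1, hx2, rfl⟩) hx3
        by_contra hcon
        push_neg at hcon
        obtain ⟨m, hm⟩ := exists_nat_one_div_lt
          (show (0:ℝ) < treeLength d p a b q - r by linarith)
        have h2 := hle m
        have h3 : r' m = r + 1 / ((m:ℝ) + 1) := rfl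
        rw [h3] at h2
        linarith
  rw [hball]
  exact IsCompact.of_isClosed_subset (hCm 0) (isClosed_iInter fun m => (hCm m).isClosed)
    (Set.iInter_subset _ 0)

end SigAux
/-- `B(r)` is compact; `𝒞_1` is σ-compact. For `1 ≤ p < 2` and `r > 0`,
the set `B(r)` of unparameterised paths of tree-reduced length at most `r` is compact in
the product topology `χ_pr`; consequently `(𝒞_1, χ_pr)` is σ-compact. -/
theorem ballB_isCompact_and_sigmaCompact {d : ℕ} (p a b r : ℝ)
    (hp1 : 1 ≤ p) (hp2 : p < 2) (hab : a ≤ b) (hr : 0 < r) :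
    @IsCompact (UPath d p a b) (prodTop d p a b) (ballB d p a b r) ∧
      @SigmaCompactSpace (UPath d 1 a b) (prodTop d 1 a b) := by
  constructor
  · exact SigAux.ballB_isCompact d p a b r hp1 hab hr
  · letI := prodTop d 1 a b
    refine ⟨⟨fun n => ballB d 1 a b (n + 1), fun n =>
      SigAux.ballB_isCompact d 1 a b (n + 1) le_rfl hab (by positivity), ?_⟩⟩
    rw [Set.iUnion_eq_univ_iff]
    intro q
    induction q using Quotient.inductionOn with
    | _ x =>
    have hbdd : BddAbove (varSums x.1 1 a b) := x.2.1.2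
    have hLx0 : 0 ≤ pvar x.1 1 a b := by
      rw [SigAux.pvar_one_eq]
      exact SigAux.VarI_nonneg hbdd hab
    refine ⟨⌈pvar x.1 1 a b⌉₊, ⟨⟨x, rfl, x.2.1⟩, ?_⟩⟩
    have h1 : treeLength d 1 a b (Quotient.mk (sigSetoid d 1 a b) x) ≤ pvar x.1 1 a b := by
      apply csInf_le
      · refine ⟨0, ?_⟩
        rintro L ⟨y, _, hyBV, hL⟩
        rw [hL, SigAux.pvar_one_eq]
        exact SigAux.VarI_nonneg hyBV.2 hab
      · exact ⟨x, rfl, x.2.1, rfl⟩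
    have h2 : pvar x.1 1 a b ≤ (⌈pvar x.1 1 a b⌉₊ : ℝ) := Nat.le_ceil _
    push_cast
    linarith

end
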